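/- arXiv:1101.2940 — 8 statements merged into one kernel-verified Lean document; each statement's English description precedes it below -/
import Mathlib

section
/- Let U be a finite type and let f : Finset U → ℝ be a nonnegative submodular set function. If S ⊆ U is the disjoint union of pairwise disjoint sets S_1, …, S_k, then f(S) ≥ Σ_{i=1}^{k} ( f(S) − f(S \ S_i) ), i.e., f(S) ≥ Σ_{i=1}^{k} f_{S∖S_i}(S_i). -/
theorem submodular_sum_of_marginals_le
    {U : Type*} [Fintype U] [DecidableEq U] (f : Finset U → ℝ)
    (hsub : ∀ S T : Finset U, f (S ∪ T) + f (S ∩ T) ≤ f S + f T)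
    (hnonneg : ∀ S : Finset U, 0 ≤ f S)
    (k : ℕ) (S : Fin k → Finset U)
    (hdisj : ∀ i j : Fin k, i ≠ j → Disjoint (S i) (S j)) :
    ∑ i : Fin k, (f (Finset.univ.biUnion S) - f (Finset.univ.biUnion S \ S i))
      ≤ f (Finset.univ.biUnion S) := by
  classical
  set A := Finset.univ.biUnion S with hA
  set B : ℕ → Finset U := fun n =>
    (Finset.univ.filter (fun j : Fin k => (j : ℕ) < n)).biUnion S with hB
  have hBsucc : ∀ i : Fin k, B ((i : ℕ) + 1) = B (i : ℕ) ∪ S i := by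
    intro i
    ext x
    simp only [hB, Finset.mem_biUnion, Finset.mem_filter, Finset.mem_univ, true_and,
      Finset.mem_union, Nat.lt_succ_iff_lt_or_eq]
    constructor
    · rintro ⟨j, hj | hj, hx⟩
      · exact Or.inl ⟨j, hj, hx⟩
      · right; rwa [show j = i from Fin.ext hj] at hx
    · rintro (⟨j, hj, hx⟩ | hx)
      · exact ⟨j, Or.inl hj, hx⟩
      · exact ⟨i, Or.inr rfl, hx⟩
  have hSA : ∀ i : Fin k, S i ⊆ A := by
    intro i x hx
    exact Finset.mem_biUnion.mpr ⟨i, Finset.mem_univ i, hx⟩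
  have hBsub : ∀ i : Fin k, B (i : ℕ) ⊆ A \ S i := by
    intro i x hx
    simp only [hB, Finset.mem_biUnion, Finset.mem_filter, Finset.mem_univ, true_and] at hx
    obtain ⟨j, hj, hx⟩ := hx
    refine Finset.mem_sdiff.mpr ⟨hSA j hx, ?_⟩
    exact fun hxi => absurd ((hdisj j i (by intro h; rw [h] at hj; omega)).le_bot
      (Finset.mem_inter.mpr ⟨hx, hxi⟩)) (by simp)
  have hterm : ∀ i : Fin k, f A - f (A \ S i) ≤ f (B ((i : ℕ) + 1)) - f (B (i : ℕ)) := by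
    intro i
    have h1 : (A \ S i) ∪ (B (i : ℕ) ∪ S i) = A := by
      have : S i ⊆ A := hSA i
      ext x
      simp only [Finset.mem_union, Finset.mem_sdiff]
      constructor
      · rintro (⟨h, _⟩ | h | h)
        · exact h
        · exact (Finset.mem_sdiff.mp (hBsub i h)).1
        · exact this h
      · intro h
        by_cases hx : x ∈ S i
        · exact Or.inr (Or.inr hx)
        · exact Or.inl ⟨h, hx⟩
    have h2 : (A \ S i) ∩ (B (i : ℕ) ∪ S i) = B (i : ℕ) := by
      ext x
      simp only [Finset.mem_inter, Finset.mem_sdiff, Finset.mem_union]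
      constructor
      · rintro ⟨⟨_, hx⟩, h | h⟩
        · exact h
        · exact absurd h hx
      · intro h
        exact ⟨Finset.mem_sdiff.mp (hBsub i h), Or.inl h⟩
    have := hsub (A \ S i) (B (i : ℕ) ∪ S i)
    rw [h1, h2, ← hBsucc i] at this
    linarith
  have hsum : ∑ i : Fin k, (f A - f (A \ S i))
      ≤ ∑ i : Fin k, (f (B ((i : ℕ) + 1)) - f (B (i : ℕ))) :=
    Finset.sum_le_sum fun i _ => hterm i
  have htel : ∑ i : Fin k, (f (B ((i : ℕ) + 1)) - f (B (i : ℕ))) = f (B k) - f (B 0) := by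
    rw [Fin.sum_univ_eq_sum_range (fun n => f (B (n + 1)) - f (B n)) k]
    exact Finset.sum_range_sub (fun n => f (B n)) k
  have hBk : B k = A := by
    ext x
    simp [hB, hA, Finset.mem_biUnion, Fin.is_lt]
  have hB0 : 0 ≤ f (B 0) := hnonneg _
  calc ∑ i : Fin k, (f A - f (A \ S i)) ≤ f (B k) - f (B 0) := by rw [← htel]; exact hsum
    _ ≤ f A := by rw [hBk]; linarith
end

section
/- Let d ≥ 1 be a natural number, 0 < ε ≤ 1, and L_1, …, L_d > 0. Suppose for each r ∈ {1, …, d} we have real random variables X_{r,1}, …, X_{r,m} on a common probability space such that, for each fixed r, the family (X_{r,k})_{k=1}^m is independent, each X_{r,k} is almost surely nonnegative, each X_{r,k} is either almost surely constant or almost surely at most ε³·L_r, and Σ_{k=1}^m E[X_{r,k}] ≤ L_r. Then P( there exists r ∈ {1,…,d} with Σ_{k=1}^m X_{r,k} ≥ (1+ε)·L_r ) ≤ d·ε. -/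
open MeasureTheory ProbabilityTheory

lemma single_row_bound
    {Ω : Type*} [MeasurableSpace Ω] (μ : Measure Ω) [IsProbabilityMeasure μ]
    (ε : ℝ) (hε : 0 < ε) (hε1 : ε ≤ 1)
    (L : ℝ) (hL : 0 < L)
    (m : ℕ) (X : Fin m → Ω → ℝ)
    (hmeas : ∀ k, Measurable (X k))
    (hindep : iIndepFun X μ)
    (hint : ∀ k, Integrable (X k) μ)
    (hnonneg : ∀ k, ∀ᵐ ω ∂μ, 0 ≤ X k ω)
    (hbound : ∀ k,
      (∃ c : ℝ, ∀ᵐ ω ∂μ, X k ω = c) ∨ (∀ᵐ ω ∂μ, X k ω ≤ ε ^ 3 * L))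
    (hsum : ∑ k : Fin m, ∫ ω, X k ω ∂μ ≤ L) :
    μ {ω | (1 + ε) * L ≤ ∑ k : Fin m, X k ω} ≤ ENNReal.ofReal ε := by
  -- each X k is in L²
  have hmem : ∀ k, MemLp (X k) 2 μ := by
    intro k
    rcases hbound k with ⟨c, hc⟩ | hb
    · exact MemLp.of_bound (hmeas k).aestronglyMeasurable |c|
        (hc.mono fun ω hω => by simp [hω])
    · refine MemLp.of_bound (hmeas k).aestronglyMeasurable (ε ^ 3 * L) ?_
      filter_upwards [hnonneg k, hb] with ω h0 h1
      rwa [Real.norm_eq_abs, abs_of_nonneg h0]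
  have hmemS : MemLp (∑ k, X k) 2 μ := memLp_finset_sum' _ fun k _ => hmem k
  -- expectation of each X k is nonneg
  have hEnn : ∀ k, 0 ≤ ∫ ω, X k ω ∂μ := fun k => integral_nonneg_of_ae (hnonneg k)
  -- variance bound per coordinate
  have hvar : ∀ k, variance (X k) μ ≤ ε ^ 3 * L * ∫ ω, X k ω ∂μ := by
    intro k
    rcases hbound k with ⟨c, hc⟩ | hb
    · have h1 : ∫ ω, (X k ω) ^ 2 ∂μ = c ^ 2 := by
        rw [integral_congr_ae (hc.mono fun ω hω => by rw [hω])]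
        simp
      have h2 : ∫ ω, X k ω ∂μ = c := by
        rw [integral_congr_ae hc]; simp
      have : variance (X k) μ = 0 := by
        rw [variance_eq_sub (hmem k)]
        simp only [Pi.pow_apply]
        rw [h1, h2]; ring
      rw [this]
      have := hEnn k
      positivity
    · have h2 : variance (X k) μ ≤ ∫ ω, (X k ω) ^ 2 ∂μ := by
        rw [variance_eq_sub (hmem k)]
        simp only [Pi.pow_apply]
        nlinarith [sq_nonneg (∫ ω, X k ω ∂μ)]
      refine h2.trans ?_
      have : ∫ ω, (X k ω) ^ 2 ∂μ ≤ ∫ ω, ε ^ 3 * L * X k ω ∂μ := by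
        refine integral_mono_ae (hmem k).integrable_sq ((hint k).const_mul _) ?_
        filter_upwards [hnonneg k, hb] with ω h0 h1
        calc (X k ω) ^ 2 = X k ω * X k ω := sq (X k ω) ▸ by ring
          _ ≤ (ε ^ 3 * L) * X k ω := mul_le_mul_of_nonneg_right h1 h0
      rw [integral_const_mul] at this
      exact this
  -- variance of the sum
  have hvarS : variance (∑ k, X k) μ ≤ ε ^ 3 * L ^ 2 := by
    rw [IndepFun.variance_sum (fun k _ => hmem k)
      (fun i _ j _ hij => hindep.indepFun hij)]
    calc ∑ k, variance (X k) μ ≤ ∑ k, ε ^ 3 * L * ∫ ω, X k ω ∂μ :=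
          Finset.sum_le_sum fun k _ => hvar k
      _ = ε ^ 3 * L * ∑ k, ∫ ω, X k ω ∂μ := by rw [Finset.mul_sum]
      _ ≤ ε ^ 3 * L * L := by
          refine mul_le_mul_of_nonneg_left hsum (by positivity)
      _ = ε ^ 3 * L ^ 2 := by ring
  -- expectation of the sum
  have hES : ∫ ω, ∑ k, X k ω ∂μ ≤ L := by
    rw [integral_finset_sum _ fun k _ => hint k]
    exact hsum
  -- Chebyshev
  have hsub : {ω | (1 + ε) * L ≤ ∑ k : Fin m, X k ω}
      ⊆ {ω | ε * L ≤ |(∑ k, X k) ω - ∫ ω, (∑ k, X k) ω ∂μ|} := by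
    intro ω hω
    simp only [Set.mem_setOf_eq] at hω ⊢
    have : ε * L ≤ (∑ k, X k) ω - ∫ ω, (∑ k, X k) ω ∂μ := by
      simp only [Finset.sum_apply]
      nlinarith [hES, hω]
    exact this.trans (le_abs_self _)
  have hcheb := meas_ge_le_variance_div_sq (μ := μ) hmemS (mul_pos hε hL)
  refine (measure_mono hsub).trans (hcheb.trans ?_)
  refine ENNReal.ofReal_le_ofReal ?_
  rw [div_le_iff₀ (by positivity)]
  calc variance (∑ k, X k) μ ≤ ε ^ 3 * L ^ 2 := hvarS
    _ = ε * (ε * L) ^ 2 := by ring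
    _ ≤ ε * (ε * L) ^ 2 := le_refl _

theorem prob_not_nearly_feasible_le
    {Ω : Type*} [MeasurableSpace Ω] (μ : Measure Ω) [IsProbabilityMeasure μ]
    (d : ℕ) (hd : 1 ≤ d) (ε : ℝ) (hε : 0 < ε) (hε1 : ε ≤ 1)
    (L : Fin d → ℝ) (hL : ∀ r, 0 < L r)
    (m : ℕ) (X : Fin d → Fin m → Ω → ℝ)
    (hmeas : ∀ r k, Measurable (X r k))
    (hindep : ∀ r, iIndepFun (X r) μ)
    (hint : ∀ r k, Integrable (X r k) μ)
    (hnonneg : ∀ r k, ∀ᵐ ω ∂μ, 0 ≤ X r k ω)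
    (hbound : ∀ r k,
      (∃ c : ℝ, ∀ᵐ ω ∂μ, X r k ω = c) ∨ (∀ᵐ ω ∂μ, X r k ω ≤ ε ^ 3 * L r))
    (hsum : ∀ r, ∑ k : Fin m, ∫ ω, X r k ω ∂μ ≤ L r) :
    μ {ω | ∃ r : Fin d, (1 + ε) * L r ≤ ∑ k : Fin m, X r k ω}
      ≤ ENNReal.ofReal (d * ε) := by
  have hset : {ω | ∃ r : Fin d, (1 + ε) * L r ≤ ∑ k : Fin m, X r k ω}
      = ⋃ r : Fin d, {ω | (1 + ε) * L r ≤ ∑ k : Fin m, X r k ω} := by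
    ext ω; simp
  rw [hset]
  calc μ (⋃ r : Fin d, {ω | (1 + ε) * L r ≤ ∑ k : Fin m, X r k ω})
      ≤ ∑ r : Fin d, μ {ω | (1 + ε) * L r ≤ ∑ k : Fin m, X r k ω} :=
        measure_iUnion_fintype_le μ _
    _ ≤ ∑ _r : Fin d, ENNReal.ofReal ε := Finset.sum_le_sum fun r _ =>
        single_row_bound μ ε hε hε1 (L r) (hL r) m (X r) (hmeas r) (hindep r)
          (hint r) (hnonneg r) (hbound r) (hsum r)
    _ = ENNReal.ofReal (d * ε) := by
        rw [Finset.sum_const, Finset.card_univ, Fintype.card_fin,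
          ENNReal.ofReal_mul (by positivity : (0:ℝ) ≤ (d:ℝ))]
        simp [nsmul_eq_mul]
end

section
/- Let d ≥ 1 and ℓ ≥ 1 be natural numbers, let U be a finite type, let c : U → ℝ^d be a cost function with c_r(i) ≥ 0 for all i and r, and let L ∈ ℝ^d with L_r > 0 for all r. Let S ⊆ U be a set such that every element i ∈ S satisfies c_r(i) ≤ L_r/2 for all r, and such that c_r(S) ≤ ℓ·L_r for all r. Then S can be partitioned into 2·d·ℓ pairwise disjoint subsets S_1, …, S_{2dℓ} (some possibly empty) whose union is S, such that each S_j is feasible, i.e., c_r(S_j) ≤ L_r for all r. -/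
theorem partition_into_feasible_sets
    {U : Type*} [Fintype U] [DecidableEq U]
    (d ℓ : ℕ) (hd : 1 ≤ d) (hℓ : 1 ≤ ℓ)
    (c : U → Fin d → ℝ) (hc : ∀ i r, 0 ≤ c i r)
    (L : Fin d → ℝ) (hL : ∀ r, 0 < L r)
    (S : Finset U)
    (hsmall : ∀ i ∈ S, ∀ r, c i r ≤ L r / 2)
    (htotal : ∀ r, ∑ i ∈ S, c i r ≤ ℓ * L r) :
    ∃ P : Fin (2 * d * ℓ) → Finset U,
      (∀ j j' : Fin (2 * d * ℓ), j ≠ j' → Disjoint (P j) (P j')) ∧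
      Finset.univ.biUnion P = S ∧
      (∀ j r, ∑ i ∈ P j, c i r ≤ L r) := by
  classical
  revert hsmall htotal
  induction S using Finset.induction_on with
  | empty =>
      intro _ _
      refine ⟨fun _ => ∅, fun _ _ _ => Finset.disjoint_empty_left _, by ext i; simp, fun j r => by
        simpa using (hL r).le⟩
  | @insert a s ha ih =>
      intro hsmall htotal
      have hne : (0 : ℕ) < 2 * d * ℓ := by positivity
      have hs_small : ∀ i ∈ s, ∀ r, c i r ≤ L r / 2 :=
        fun i hi r => hsmall i (Finset.mem_insert_of_mem hi) r
      have hs_total : ∀ r, ∑ i ∈ s, c i r ≤ ℓ * L r := by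
        intro r
        have := htotal r
        rw [Finset.sum_insert ha] at this
        have := hc a r
        linarith
      obtain ⟨P, hdisj, hunion, hfeas⟩ := ih hs_small hs_total
      have hPsub : ∀ j, P j ⊆ s := fun j =>
        hunion ▸ Finset.subset_biUnion_of_mem P (Finset.mem_univ j)
      -- find a part whose every coordinate sum is at most L r / 2
      have hgood : ∃ j, ∀ r, ∑ i ∈ P j, c i r ≤ L r / 2 := by
        by_contra hbad
        push_neg at hbad
        choose f hf using hbad
        have hfib : ∀ r : Fin d,
            (Finset.univ.filter (fun j => f j = r)).card ≤ 2 * ℓ - 1 := by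
          intro r
          by_contra hcard
          push_neg at hcard
          set F := Finset.univ.filter (fun j => f j = r) with hF
          have hcard' : 2 * ℓ ≤ F.card := by omega
          have hFne : F.Nonempty := Finset.card_pos.mp (by omega)
          have hsum : ∑ j ∈ F, ∑ i ∈ P j, c i r ≤ ∑ i ∈ s, c i r := by
            rw [← Finset.sum_biUnion (fun x _ y _ hxy => hdisj x y hxy)]
            refine Finset.sum_le_sum_of_subset_of_nonneg ?_ (fun i _ _ => hc i r)
            intro i hi
            obtain ⟨j, hj, hij⟩ := Finset.mem_biUnion.mp hi
            exact hPsub j hij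
          have hlb : (F.card : ℝ) * (L r / 2) < ∑ j ∈ F, ∑ i ∈ P j, c i r := by
            have := Finset.sum_lt_sum_of_nonempty hFne
              (fun j _ => by
                have hfj : f j = r := (Finset.mem_filter.mp ‹j ∈ F›).2
                simpa [hfj] using hf j)
            simpa [Finset.sum_const, nsmul_eq_mul] using this
          have h1 : (F.card : ℝ) * (L r / 2) < ℓ * L r :=
            lt_of_lt_of_le hlb (le_trans hsum (hs_total r))
          have h2 : (2 * ℓ : ℝ) ≤ (F.card : ℝ) := by exact_mod_cast hcard'
          have := hL r
          nlinarith
        have hcount : (Finset.univ : Finset (Fin (2 * d * ℓ))).card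
            ≤ ∑ r : Fin d, (Finset.univ.filter (fun j => f j = r)).card :=
          le_of_eq (Finset.card_eq_sum_card_fiberwise (fun j _ => Finset.mem_univ (f j)))
        have hle : 2 * d * ℓ ≤ d * (2 * ℓ - 1) := by
          calc 2 * d * ℓ = (Finset.univ : Finset (Fin (2 * d * ℓ))).card := by simp
            _ ≤ ∑ r : Fin d, (Finset.univ.filter (fun j => f j = r)).card := hcount
            _ ≤ ∑ _r : Fin d, (2 * ℓ - 1) := Finset.sum_le_sum (fun r _ => hfib r)
            _ = d * (2 * ℓ - 1) := by simp [mul_comm]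
        have h2 : d * (2 * ℓ) ≤ d * (2 * ℓ - 1) := by
          calc d * (2 * ℓ) = 2 * d * ℓ := by ring
            _ ≤ d * (2 * ℓ - 1) := hle
        have := Nat.le_of_mul_le_mul_left h2 (by omega)
        omega
      obtain ⟨j0, hj0⟩ := hgood
      have haP : ∀ j, a ∉ P j := fun j hja => ha (hPsub j hja)
      refine ⟨Function.update P j0 (insert a (P j0)), ?_, ?_, ?_⟩
      · intro j j' hjj'
        rw [Finset.disjoint_left]
        intro i hi hi'
        by_cases h1 : j = j0 <;> by_cases h2 : j' = j0
        · exact hjj' (h1.trans h2.symm)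
        · subst h1
          rw [Function.update_self] at hi
          rw [Function.update_of_ne h2] at hi'
          rcases Finset.mem_insert.mp hi with rfl | hi
          · exact haP j' hi'
          · exact (Finset.disjoint_left.mp (hdisj j j' hjj') hi) hi'
        · subst h2
          rw [Function.update_self] at hi'
          rw [Function.update_of_ne h1] at hi
          rcases Finset.mem_insert.mp hi' with rfl | hi'
          · exact haP j hi
          · exact (Finset.disjoint_left.mp (hdisj j j' hjj') hi) hi'
        · rw [Function.update_of_ne h1] at hi
          rw [Function.update_of_ne h2] at hi'
          exact (Finset.disjoint_left.mp (hdisj j j' hjj') hi) hi'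
      · ext i
        simp only [Finset.mem_biUnion, Finset.mem_univ, true_and, Finset.mem_insert]
        constructor
        · rintro ⟨j, hj⟩
          by_cases h1 : j = j0
          · subst h1
            rw [Function.update_self] at hj
            rcases Finset.mem_insert.mp hj with rfl | hj
            · exact Or.inl rfl
            · exact Or.inr (hunion ▸ Finset.mem_biUnion.mpr ⟨j, Finset.mem_univ _, hj⟩)
          · rw [Function.update_of_ne h1] at hj
            exact Or.inr (hunion ▸ Finset.mem_biUnion.mpr ⟨j, Finset.mem_univ _, hj⟩)
        · rintro (rfl | hi)
          · exact ⟨j0, by rw [Function.update_self]; exact Finset.mem_insert_self _ _⟩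
          · rw [← hunion] at hi
            obtain ⟨j, _, hj⟩ := Finset.mem_biUnion.mp hi
            by_cases h1 : j = j0
            · subst h1
              exact ⟨j, by rw [Function.update_self]; exact Finset.mem_insert_of_mem hj⟩
            · exact ⟨j, by rw [Function.update_of_ne h1]; exact hj⟩
      · intro j r
        by_cases h1 : j = j0
        · subst h1
          rw [Function.update_self, Finset.sum_insert (haP j)]
          have := hsmall a (Finset.mem_insert_self a s) r
          have := hj0 r
          linarith
        · rw [Function.update_of_ne h1]
          exact hfeas j r
end

section
/- Let d ≥ 1 and ℓ ≥ 1 be natural numbers, let U be a finite type, let f : Finset U → ℝ be a nonnegative submodular set function with f(∅) ≥ 0, let c : U → ℝ^d be a cost function with c_r(i) ≥ 0 for all i and r, and let L ∈ ℝ^d with L_r > 0 for all r. Let 𝒪 denote the maximum of f(T) over all feasible T ⊆ U. If S ⊆ U satisfies c_r(i) ≤ L_r/2 for every i ∈ S and every r, and c_r(S) ≤ ℓ·L_r for all r, then f(S) ≤ 2·d·ℓ·𝒪. -/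
open Classical in
private lemma submod_aux
    {U : Type*} [Fintype U] [DecidableEq U]
    (d : ℕ)
    (f : Finset U → ℝ)
    (hsub : ∀ S T : Finset U, f (S ∪ T) + f (S ∩ T) ≤ f S + f T)
    (hnonneg : ∀ S : Finset U, 0 ≤ f S)
    (c : U → Fin d → ℝ) (hc : ∀ i r, 0 ≤ c i r)
    (L : Fin d → ℝ) (hL : ∀ r, 0 < L r)
    (O : ℝ)
    (hO : IsGreatest
      {y : ℝ | ∃ T : Finset U, (∀ r, ∑ i ∈ T, c i r ≤ L r) ∧ f T = y} O)
    (hO0 : 0 ≤ O) :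
    ∀ n (S : Finset U), S.card ≤ n → (∀ i ∈ S, ∀ r, c i r ≤ L r / 2) →
      f S ≤ max 1 (∑ r, 2 * (∑ i ∈ S, c i r) / L r) * O := by
  intro n
  induction n with
  | zero =>
    intro S hcard _
    have hS : S = ∅ := Finset.card_eq_zero.mp (Nat.le_zero.mp hcard)
    subst hS
    have : f (∅ : Finset U) ≤ O := hO.2 ⟨∅, fun r => by simp [le_of_lt (hL r)], rfl⟩
    calc f (∅ : Finset U) ≤ O := this
      _ = 1 * O := (one_mul O).symm
      _ ≤ max 1 (∑ r, 2 * (∑ i ∈ (∅ : Finset U), c i r) / L r) * O := by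
          apply mul_le_mul_of_nonneg_right (le_max_left _ _) hO0
  | succ n ih =>
    intro S hcard hsmall
    by_cases hfeas : ∀ r, ∑ i ∈ S, c i r ≤ L r
    · have : f S ≤ O := hO.2 ⟨S, hfeas, rfl⟩
      calc f S ≤ O := this
        _ = 1 * O := (one_mul O).symm
        _ ≤ _ := mul_le_mul_of_nonneg_right (le_max_left _ _) hO0
    · -- S is infeasible
      push_neg at hfeas
      obtain ⟨r0, hr0⟩ := hfeas
      -- the potential of S is > 2
      have hPhiS : 2 < ∑ r, 2 * (∑ i ∈ S, c i r) / L r := by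
        have h1 : 2 < 2 * (∑ i ∈ S, c i r0) / L r0 := by
          rw [lt_div_iff₀ (hL r0)]
          linarith
        have h2 : ∀ r ∈ Finset.univ, r ≠ r0 → 0 ≤ 2 * (∑ i ∈ S, c i r) / L r := by
          intro r _ _
          apply div_nonneg _ (le_of_lt (hL r))
          have : 0 ≤ ∑ i ∈ S, c i r := Finset.sum_nonneg fun i _ => hc i r
          linarith
        calc (2:ℝ) < 2 * (∑ i ∈ S, c i r0) / L r0 := h1
          _ ≤ ∑ r, 2 * (∑ i ∈ S, c i r) / L r :=
              Finset.single_le_sum (f := fun r => 2 * (∑ i ∈ S, c i r) / L r)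
                (fun r _ => by
                  apply div_nonneg _ (le_of_lt (hL r))
                  have : 0 ≤ ∑ i ∈ S, c i r := Finset.sum_nonneg fun i _ => hc i r
                  linarith)
                (Finset.mem_univ r0)
      -- pick a maximum-cardinality feasible subset T of S
      set Fs : Finset (Finset U) :=
        S.powerset.filter (fun T => ∀ r, ∑ i ∈ T, c i r ≤ L r) with hFs
      have hne : Fs.Nonempty := by
        refine ⟨∅, ?_⟩
        simp [hFs, fun r => le_of_lt (hL r)]
      obtain ⟨T, hTmem, hTmax⟩ := Finset.exists_max_image Fs Finset.card hne
      rw [hFs, Finset.mem_filter, Finset.mem_powerset] at hTmem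
      obtain ⟨hTS, hTfeas⟩ := hTmem
      -- T ≠ S, get i ∈ S \ T
      have hTne : T ≠ S := by
        rintro rfl; exact hr0.not_ge (hTfeas r0)
      obtain ⟨i, hiS, hiT⟩ :=
        Finset.exists_of_ssubset (lt_of_le_of_ne hTS hTne)
      -- insert i T is infeasible
      have hins : ¬ ∀ r, ∑ j ∈ insert i T, c j r ≤ L r := by
        intro hgood
        have hmem : insert i T ∈ Fs := by
          rw [hFs, Finset.mem_filter, Finset.mem_powerset]
          exact ⟨Finset.insert_subset hiS hTS, hgood⟩
        have := hTmax _ hmem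
        rw [Finset.card_insert_of_notMem hiT] at this
        omega
      push_neg at hins
      obtain ⟨r1, hr1⟩ := hins
      rw [Finset.sum_insert hiT] at hr1
      have hci : c i r1 ≤ L r1 / 2 := hsmall i hiS r1
      have hThalf : L r1 / 2 < ∑ j ∈ T, c j r1 := by linarith
      -- T nonempty
      have hTne' : T.Nonempty := by
        rcases T.eq_empty_or_nonempty with h | h
        · exfalso; rw [h] at hThalf; simp at hThalf; linarith [hL r1]
        · exact h
      -- Phi T > 1
      have hPhiT : 1 < ∑ r, 2 * (∑ i ∈ T, c i r) / L r := by
        have h1 : 1 < 2 * (∑ i ∈ T, c i r1) / L r1 := by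
          rw [lt_div_iff₀ (hL r1)]
          linarith
        calc (1:ℝ) < 2 * (∑ i ∈ T, c i r1) / L r1 := h1
          _ ≤ ∑ r, 2 * (∑ i ∈ T, c i r) / L r :=
              Finset.single_le_sum (f := fun r => 2 * (∑ i ∈ T, c i r) / L r)
                (fun r _ => by
                  apply div_nonneg _ (le_of_lt (hL r))
                  have : 0 ≤ ∑ i ∈ T, c i r := Finset.sum_nonneg fun i _ => hc i r
                  linarith)
                (Finset.mem_univ r1)
      -- split potential
      have hsplit : ∀ r, ∑ j ∈ S, c j r = (∑ j ∈ T, c j r) + ∑ j ∈ S \ T, c j r := by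
        intro r
        rw [← Finset.sum_union (Finset.disjoint_sdiff), Finset.union_sdiff_of_subset hTS]
      have hPhisplit :
          (∑ r, 2 * (∑ i ∈ S, c i r) / L r)
            = (∑ r, 2 * (∑ i ∈ T, c i r) / L r) + ∑ r, 2 * (∑ i ∈ S \ T, c i r) / L r := by
        rw [← Finset.sum_add_distrib]
        apply Finset.sum_congr rfl
        intro r _
        rw [hsplit r]; ring
      -- induction on S \ T
      have hcard' : (S \ T).card ≤ n := by
        have h1 : (S \ T).card = S.card - T.card := Finset.card_sdiff_of_subset hTS
        have h2 : 0 < T.card := Finset.card_pos.mpr hTne'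
        omega
      have hsmall' : ∀ j ∈ S \ T, ∀ r, c j r ≤ L r / 2 := fun j hj r =>
        hsmall j (Finset.mem_sdiff.mp hj).1 r
      have hIH := ih (S \ T) hcard' hsmall'
      -- subadditivity : f S ≤ f T + f (S \ T)
      have hfS : f S ≤ f T + f (S \ T) := by
        have h := hsub T (S \ T)
        rw [Finset.union_sdiff_of_subset hTS] at h
        have h0 : 0 ≤ f (T ∩ (S \ T)) := hnonneg _
        linarith
      have hfT : f T ≤ O := hO.2 ⟨T, hTfeas, rfl⟩
      -- chain of bounds
      have hmax' : max 1 (∑ r, 2 * (∑ i ∈ S \ T, c i r) / L r)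
          ≤ (∑ r, 2 * (∑ i ∈ S, c i r) / L r) - 1 := by
        rw [max_le_iff]
        constructor
        · linarith
        · rw [hPhisplit]; linarith
      have hfinal : f S ≤ (∑ r, 2 * (∑ i ∈ S, c i r) / L r) * O := by
        have h1 : f (S \ T) ≤ ((∑ r, 2 * (∑ i ∈ S, c i r) / L r) - 1) * O :=
          le_trans hIH (mul_le_mul_of_nonneg_right hmax' hO0)
        nlinarith
      calc f S ≤ (∑ r, 2 * (∑ i ∈ S, c i r) / L r) * O := hfinal
        _ ≤ max 1 (∑ r, 2 * (∑ i ∈ S, c i r) / L r) * O :=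
            mul_le_mul_of_nonneg_right (le_max_right _ _) hO0

theorem submodular_value_le_of_bounded_cost
    {U : Type*} [Fintype U] [DecidableEq U]
    (d ℓ : ℕ) (hd : 1 ≤ d) (hℓ : 1 ≤ ℓ)
    (f : Finset U → ℝ)
    (hsub : ∀ S T : Finset U, f (S ∪ T) + f (S ∩ T) ≤ f S + f T)
    (hnonneg : ∀ S : Finset U, 0 ≤ f S)
    (hempty : 0 ≤ f ∅)
    (c : U → Fin d → ℝ) (hc : ∀ i r, 0 ≤ c i r)
    (L : Fin d → ℝ) (hL : ∀ r, 0 < L r)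
    (O : ℝ)
    (hO : IsGreatest
      {y : ℝ | ∃ T : Finset U, (∀ r, ∑ i ∈ T, c i r ≤ L r) ∧ f T = y} O)
    (S : Finset U)
    (hsmall : ∀ i ∈ S, ∀ r, c i r ≤ L r / 2)
    (htotal : ∀ r, ∑ i ∈ S, c i r ≤ ℓ * L r) :
    f S ≤ 2 * (d : ℝ) * (ℓ : ℝ) * O := by
  have hO0 : 0 ≤ O := by
    have : f ∅ ≤ O := hO.2 ⟨∅, fun r => by simp [le_of_lt (hL r)], rfl⟩
    linarith
  have hmain := submod_aux d f hsub hnonneg c hc L hL O hO hO0 S.card S le_rfl hsmall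
  have hPhi : (∑ r, 2 * (∑ i ∈ S, c i r) / L r) ≤ 2 * (d : ℝ) * (ℓ : ℝ) := by
    calc (∑ r, 2 * (∑ i ∈ S, c i r) / L r)
        ≤ ∑ _r : Fin d, 2 * (ℓ : ℝ) := by
          apply Finset.sum_le_sum
          intro r _
          rw [div_le_iff₀ (hL r)]
          have := htotal r
          have hl2 : 2 * (ℓ : ℝ) * L r = 2 * ((ℓ : ℝ) * L r) := by ring
          nlinarith [hL r]
      _ = (d : ℝ) * (2 * (ℓ : ℝ)) := by
          rw [Finset.sum_const, Finset.card_univ, Fintype.card_fin, nsmul_eq_mul]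
      _ = 2 * (d : ℝ) * (ℓ : ℝ) := by ring
  have hdl : (1:ℝ) ≤ 2 * (d : ℝ) * (ℓ : ℝ) := by
    have hd' : (1:ℝ) ≤ (d:ℝ) := by exact_mod_cast hd
    have hl' : (1:ℝ) ≤ (ℓ:ℝ) := by exact_mod_cast hℓ
    nlinarith
  have : max 1 (∑ r, 2 * (∑ i ∈ S, c i r) / L r) ≤ 2 * (d : ℝ) * (ℓ : ℝ) :=
    max_le hdl hPhi
  calc f S ≤ max 1 (∑ r, 2 * (∑ i ∈ S, c i r) / L r) * O := hmain
    _ ≤ 2 * (d : ℝ) * (ℓ : ℝ) * O := mul_le_mul_of_nonneg_right this hO0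
end

section
/- For every natural number d ≥ 1 there exists a constant C > 0 (depending only on d) such that the following holds. Let U be a finite type, let f : Finset U → ℝ be a nonnegative submodular set function with f(∅) = 0, let c : U → ℝ^d with c_r(i) ≥ 0, let L ∈ ℝ^d with L_r > 0, and let 0 < ε < 1. Assume every element of U is small, i.e., c_r(i) ≤ ε³·L_r for all i ∈ U and all r. Let 𝒪 = max { f(T) : T ⊆ U feasible }. Let x ∈ [0,1]^U satisfy Σ_{i∈U} x_i·c_r(i) ≤ L_r for all r, and assume E[f(D)] ≥ 𝒪/5, where D ⊆ U is a random set in which each element i is included independently with probability x_i. Then E[ f(D) · 1{D is ε-nearly feasible} ] ≥ (1 − C·ε) · E[f(D)]. -/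
open scoped Classical

/-- The extension by expectation (multilinear extension) of a set function. -/
noncomputable def mulExt {U : Type*} [Fintype U] [DecidableEq U]
    (f : Finset U → ℝ) (y : U → ℝ) : ℝ :=
  ∑ R : Finset U, f R * ((∏ i ∈ R, y i) * ∏ i ∈ Rᶜ, (1 - y i))

lemma sum_prod_eq {U : Type} [Fintype U] [DecidableEq U] (a b : U → ℝ) :
    ∑ R : Finset U, (∏ i ∈ R, a i) * (∏ i ∈ Rᶜ, b i) = ∏ i : U, (a i + b i) := by
  rw [Finset.prod_add, ← Finset.powerset_univ]
  apply Finset.sum_congr rfl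
  intro t _
  simp [Finset.compl_eq_univ_sdiff]

lemma mgf_eq {U : Type} [Fintype U] [DecidableEq U] (x a : U → ℝ) (t : ℝ) :
    ∑ R : Finset U, Real.exp (t * ∑ i ∈ R, a i) * ((∏ i ∈ R, x i) * ∏ i ∈ Rᶜ, (1 - x i))
    = ∏ i : U, (x i * Real.exp (t * a i) + (1 - x i)) := by
  rw [← sum_prod_eq (fun i => x i * Real.exp (t * a i)) (fun i => 1 - x i)]
  apply Finset.sum_congr rfl
  intro R _
  rw [Finset.prod_mul_distrib, Finset.mul_sum, Real.exp_sum]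
  ring

lemma mgf_bound {U : Type} [Fintype U] [DecidableEq U] (x a : U → ℝ) (β t : ℝ)
    (hx : ∀ i, 0 ≤ x i ∧ x i ≤ 1) (ha : ∀ i, 0 ≤ a i ∧ a i ≤ β) (hβ : 0 < β)
    (hμ : ∑ i : U, x i * a i ≤ 1) (ht : 0 ≤ t) :
    ∏ i : U, (x i * Real.exp (t * a i) + (1 - x i)) ≤
      Real.exp ((Real.exp (t * β) - 1) / β) := by
  have hexp1 : (1:ℝ) ≤ Real.exp (t * β) := by
    rw [Real.one_le_exp_iff]; positivity
  have key : ∀ i, x i * Real.exp (t * a i) + (1 - x i) ≤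
      Real.exp (x i * a i * ((Real.exp (t * β) - 1) / β)) := by
    intro i
    have hai := ha i
    have hxi := hx i
    have hw1 : (0:ℝ) ≤ 1 - a i / β := by
      rw [sub_nonneg]; exact div_le_one_of_le₀ hai.2 hβ.le
    have hw2 : (0:ℝ) ≤ a i / β := div_nonneg hai.1 hβ.le
    have h1 : Real.exp (t * a i) ≤ 1 + (a i / β) * (Real.exp (t * β) - 1) := by
      have hconv := convexOn_exp.2 (Set.mem_univ (0:ℝ)) (Set.mem_univ (t * β))
        hw1 hw2 (by ring)
      simp only [smul_eq_mul, mul_zero, zero_add, Real.exp_zero, mul_one] at hconv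
      have harg : (a i / β) * (t * β) = t * a i := by field_simp
      rw [harg] at hconv
      calc Real.exp (t * a i) ≤ (1 - a i / β) + (a i / β) * Real.exp (t * β) := hconv
        _ = 1 + (a i / β) * (Real.exp (t * β) - 1) := by ring
    have h2 : x i * Real.exp (t * a i) + (1 - x i) ≤
        1 + x i * (a i / β) * (Real.exp (t * β) - 1) := by
      nlinarith [hxi.1, h1]
    refine h2.trans ?_
    have h3 := Real.add_one_le_exp (x i * a i * ((Real.exp (t * β) - 1) / β))
    calc 1 + x i * (a i / β) * (Real.exp (t * β) - 1)
        = x i * a i * ((Real.exp (t * β) - 1) / β) + 1 := by ring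
      _ ≤ Real.exp (x i * a i * ((Real.exp (t * β) - 1) / β)) := h3
  calc ∏ i : U, (x i * Real.exp (t * a i) + (1 - x i))
      ≤ ∏ i : U, Real.exp (x i * a i * ((Real.exp (t * β) - 1) / β)) := by
        apply Finset.prod_le_prod
        · intro i _
          nlinarith [(hx i).1, (hx i).2, Real.exp_pos (t * a i),
            Real.one_le_exp (mul_nonneg ht (ha i).1)]
        · intro i _; exact key i
    _ = Real.exp (∑ i : U, x i * a i * ((Real.exp (t * β) - 1) / β)) := by
        rw [Real.exp_sum]
    _ ≤ Real.exp ((Real.exp (t * β) - 1) / β) := by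
        apply Real.exp_le_exp.2
        rw [← Finset.sum_mul]
        have h := div_nonneg (by linarith : (0:ℝ) ≤ Real.exp (t*β) - 1) hβ.le
        nlinarith [h]

lemma exp_neg_le_inv (t : ℝ) (ht : 0 < t) : Real.exp (-t) ≤ 1/t := by
  have h1 := Real.add_one_le_exp t
  rw [Real.exp_neg, inv_eq_one_div, div_le_div_iff₀ (Real.exp_pos t) ht]
  nlinarith

lemma exp_neg_le_sq (t : ℝ) (ht : 0 < t) : Real.exp (-t) ≤ 4/t^2 := by
  have h1 : t/2 + 1 ≤ Real.exp (t/2) := Real.add_one_le_exp (t/2)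
  have h2 : Real.exp t = Real.exp (t/2) * Real.exp (t/2) := by
    rw [← Real.exp_add]; ring_nf
  have h3 : t^2/4 ≤ Real.exp t := by nlinarith
  rw [Real.exp_neg, inv_eq_one_div, div_le_div_iff₀ (Real.exp_pos t) (by positivity)]
  nlinarith

lemma exp_quad (x : ℝ) (h0 : 0 ≤ x) (h1 : x ≤ 1) :
    Real.exp x ≤ 1 + x + (3/4)*x^2 := by
  have hb := Real.exp_bound (x := x) (by rwa [abs_of_nonneg h0]) (n := 2) (by norm_num)
  have hs : ∑ m ∈ Finset.range 2, x ^ m / (Nat.factorial m : ℝ) = 1 + x := by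
    simp [Finset.sum_range_succ]
  rw [hs, abs_of_nonneg h0] at hb
  have : Real.exp x - (1 + x) ≤ x^2 * ((2:ℕ).succ / ((Nat.factorial 2 : ℝ) * 2)) :=
    (abs_le.1 hb).2
  norm_num [Nat.factorial] at this
  nlinarith

lemma structural_bound {U : Type} [Fintype U] [DecidableEq U] (d : ℕ)
    (f : Finset U → ℝ)
    (hsub : ∀ S T : Finset U, f (S ∪ T) + f (S ∩ T) ≤ f S + f T)
    (hnn : ∀ S : Finset U, 0 ≤ f S) (h0 : f ∅ = 0)
    (c : U → Fin d → ℝ) (hc : ∀ i r, 0 ≤ c i r)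
    (L : Fin d → ℝ) (hL : ∀ r, 0 < L r)
    (hsmall : ∀ i r, c i r ≤ L r)
    (O : ℝ)
    (hO : IsGreatest {y : ℝ | ∃ T : Finset U, (∀ r, ∑ i ∈ T, c i r ≤ L r) ∧ f T = y} O) :
    ∀ S : Finset U, f S ≤ O * (1 + 2 * ∑ r : Fin d, (∑ i ∈ S, c i r) / L r) := by
  have hfeasO : ∀ T : Finset U, (∀ r, ∑ i ∈ T, c i r ≤ L r) → f T ≤ O := by
    intro T hT; exact hO.2 ⟨T, hT, rfl⟩
  have hO0 : 0 ≤ O := by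
    have := hO.2 ⟨∅, fun r => by simp [(hL r).le], h0⟩
    linarith
  have hsubadd : ∀ A B : Finset U, f (A ∪ B) ≤ f A + f B := by
    intro A B
    have := hsub A B
    have := hnn (A ∩ B)
    linarith
  intro S
  induction S using Finset.strongInductionOn with
  | _ S ih =>
    have hσ : ∀ T : Finset U, 0 ≤ ∑ r : Fin d, (∑ i ∈ T, c i r) / L r := by
      intro T
      apply Finset.sum_nonneg
      intro r _
      exact div_nonneg (Finset.sum_nonneg fun i _ => hc i r) (hL r).le
    by_cases hfeas : ∀ r, ∑ i ∈ S, c i r ≤ L r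
    · have h1 : f S ≤ O := hfeasO S hfeas
      nlinarith [hσ S]
    · -- choose maximal feasible subset of S
      set Fam : Finset (Finset U) :=
        S.powerset.filter (fun P => ∀ r, ∑ i ∈ P, c i r ≤ L r) with hFam
      have hne : Fam.Nonempty := ⟨∅, by simp [hFam, (fun r => by simp [(hL r).le] : ∀ r, ∑ i ∈ (∅:Finset U), c i r ≤ L r)]⟩
      obtain ⟨P, hPmem, hPmax⟩ : ∃ P ∈ Fam, ∀ Q ∈ Fam, ¬ P < Q := by
        obtain ⟨P, hP⟩ := Finset.exists_maximal hne
        exact ⟨P, hP.1, fun Q hQ hlt => lt_irrefl P (lt_of_lt_of_le hlt (hP.2 hQ hlt.le))⟩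
      rw [hFam, Finset.mem_filter, Finset.mem_powerset] at hPmem
      obtain ⟨hPS, hPfeas⟩ := hPmem
      have hPne : P ≠ S := by rintro rfl; exact hfeas hPfeas
      have hssub : P ⊂ S := ssubset_of_subset_of_ne hPS hPne
      obtain ⟨e, heS, heP⟩ := Finset.exists_of_ssubset hssub
      set Q : Finset U := insert e P with hQ
      have hQS : Q ⊆ S := Finset.insert_subset heS hPS
      have hQinfeas : ¬ ∀ r, ∑ i ∈ Q, c i r ≤ L r := by
        intro hQf
        have hQmem : Q ∈ Fam := by
          rw [hFam, Finset.mem_filter, Finset.mem_powerset]; exact ⟨hQS, hQf⟩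
        exact hPmax Q hQmem (Finset.ssubset_insert heP)
      push_neg at hQinfeas
      obtain ⟨s, hs⟩ := hQinfeas
      set S' : Finset U := S \ Q with hS'
      have hS'sub : S' ⊂ S := by
        apply Finset.sdiff_ssubset hQS
        exact ⟨e, Finset.mem_insert_self e P⟩
      -- f S ≤ f Q + f S'
      have hsplit : f S ≤ f Q + f S' := by
        have hu : Q ∪ S' = S := Finset.union_sdiff_of_subset hQS
        have := hsubadd Q S'
        rwa [hu] at this
      -- f Q ≤ 2 O
      have hfQ : f Q ≤ 2 * O := by
        have h1 : f Q ≤ f P + f {e} := by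
          have hu : P ∪ {e} = Q := by
            rw [hQ, Finset.union_comm]; rfl
          have := hsubadd P {e}
          rwa [hu] at this
        have h2 : f P ≤ O := hfeasO P hPfeas
        have h3 : f {e} ≤ O := hfeasO {e} (fun r => by simpa using hsmall e r)
        linarith
      have hIH := ih S' hS'sub
      -- cost split
      have hcost : ∀ r, ∑ i ∈ S, c i r = ∑ i ∈ S', c i r + ∑ i ∈ Q, c i r := by
        intro r
        rw [hS']
        exact (Finset.sum_sdiff hQS).symm
      have hQbig : 1 ≤ ∑ r : Fin d, (∑ i ∈ Q, c i r) / L r := by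
        have h1 : 1 < (∑ i ∈ Q, c i s) / L s := by
          rw [lt_div_iff₀ (hL s)]; linarith
        have h2 : ∀ r ∈ (Finset.univ : Finset (Fin d)), r ≠ s →
            0 ≤ (∑ i ∈ Q, c i r) / L r := fun r _ _ =>
          div_nonneg (Finset.sum_nonneg fun i _ => hc i r) (hL r).le
        calc (1:ℝ) ≤ (∑ i ∈ Q, c i s) / L s := h1.le
          _ ≤ ∑ r : Fin d, (∑ i ∈ Q, c i r) / L r :=
            Finset.single_le_sum (f := fun r => (∑ i ∈ Q, c i r) / L r)
              (fun r _ => div_nonneg (Finset.sum_nonneg fun i _ => hc i r) (hL r).le)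
              (Finset.mem_univ s)
      have hdecomp : ∑ r : Fin d, (∑ i ∈ S, c i r) / L r
          = ∑ r : Fin d, (∑ i ∈ S', c i r) / L r + ∑ r : Fin d, (∑ i ∈ Q, c i r) / L r := by
        rw [← Finset.sum_add_distrib]
        apply Finset.sum_congr rfl
        intro r _
        rw [hcost r, add_div]
      rw [hdecomp]
      nlinarith [hσ S']

lemma sum_expand {U : Type} [Fintype U] [DecidableEq U] {K : Type} [Fintype K]
    (O c1 : ℝ) (E : Finset U → ℝ) (Es : K → Finset U → ℝ) (w : Finset U → ℝ) :
    ∑ R : Finset U, (O * (c1 * E R + 2 * ∑ s : K, Es s R)) * w R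
      = O * c1 * (∑ R : Finset U, E R * w R) +
        2 * O * ∑ s : K, ∑ R : Finset U, Es s R * w R := by
  have pt : ∀ R : Finset U, (O * (c1 * E R + 2 * ∑ s : K, Es s R)) * w R
      = O * c1 * (E R * w R) + 2 * O * ∑ s : K, Es s R * w R := by
    intro R
    rw [← Finset.sum_mul]
    ring
  rw [Finset.sum_congr rfl fun R _ => pt R, Finset.sum_add_distrib,
    ← Finset.mul_sum, ← Finset.mul_sum, Finset.sum_comm]

set_option maxHeartbeats 2000000 in
theorem expected_value_nearly_feasible_realizations
    (d : ℕ) (hd : 1 ≤ d) :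
    ∃ C : ℝ, 0 < C ∧
      ∀ (U : Type) [Fintype U] [DecidableEq U],
      ∀ (f : Finset U → ℝ),
        (∀ S T : Finset U, f (S ∪ T) + f (S ∩ T) ≤ f S + f T) →
        (∀ S : Finset U, 0 ≤ f S) →
        f ∅ = 0 →
      ∀ (c : U → Fin d → ℝ), (∀ i r, 0 ≤ c i r) →
      ∀ (L : Fin d → ℝ), (∀ r, 0 < L r) →
      ∀ (ε : ℝ), 0 < ε → ε < 1 →
        (∀ (i : U) (r : Fin d), c i r ≤ ε ^ 3 * L r) →
      ∀ (O : ℝ),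
        IsGreatest
          {y : ℝ | ∃ T : Finset U, (∀ r, ∑ i ∈ T, c i r ≤ L r) ∧ f T = y} O →
      ∀ (x : U → ℝ), (∀ i, 0 ≤ x i ∧ x i ≤ 1) →
        (∀ r, ∑ i : U, x i * c i r ≤ L r) →
        O / 5 ≤ mulExt f x →
        (1 - C * ε) * mulExt f x ≤
          ∑ R : Finset U,
            (if ∀ r, ∑ i ∈ R, c i r ≤ (1 + ε) * L r then f R else 0) *
              ((∏ i ∈ R, x i) * ∏ i ∈ Rᶜ, (1 - x i)) := by
  refine ⟨2000 * ((d:ℝ)+1)^2, by positivity, ?_⟩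
  intro U _ _ f hsub hnn h0 c hc L hL ε hε0 hε1 hsmall O hO x hx hbudget hlow
  have hd1 : (1:ℝ) ≤ (d:ℝ) := by exact_mod_cast hd
  have hw : ∀ R : Finset U, 0 ≤ (∏ i ∈ R, x i) * ∏ i ∈ Rᶜ, (1 - x i) := by
    intro R
    apply mul_nonneg <;> apply Finset.prod_nonneg <;> intro i _
    · exact (hx i).1
    · linarith [(hx i).2]
  have hF0 : 0 ≤ mulExt f x := by
    unfold mulExt
    exact Finset.sum_nonneg fun R _ => mul_nonneg (hnn R) (hw R)
  have hO0 : 0 ≤ O := by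
    have := hO.2 ⟨∅, fun r => by simp [(hL r).le], h0⟩
    linarith
  have hOF : O ≤ 5 * mulExt f x := by linarith
  have hRHS0 : 0 ≤ ∑ R : Finset U,
      (if ∀ r, ∑ i ∈ R, c i r ≤ (1 + ε) * L r then f R else 0) *
        ((∏ i ∈ R, x i) * ∏ i ∈ Rᶜ, (1 - x i)) := by
    apply Finset.sum_nonneg
    intro R _
    apply mul_nonneg _ (hw R)
    by_cases h : ∀ r, ∑ i ∈ R, c i r ≤ (1 + ε) * L r <;> simp [h, hnn R]
  by_cases hεhalf : 1/2 < ε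
  · -- large ε: LHS ≤ 0 ≤ RHS
    have h1 : 1 - 2000 * ((d:ℝ)+1)^2 * ε ≤ 0 := by nlinarith
    calc (1 - 2000 * ((d:ℝ)+1)^2 * ε) * mulExt f x ≤ 0 :=
          mul_nonpos_of_nonpos_of_nonneg h1 hF0
      _ ≤ _ := hRHS0
  push_neg at hεhalf
  -- main case : ε ≤ 1/2
  have hε3 : (0:ℝ) < ε^3 := by positivity
  set lam : ℝ := 1/(2*ε^2) with hlam
  have hlam0 : 0 < lam := by rw [hlam]; positivity
  -- MGF helper
  have hmgfHelp : ∀ (r : Fin d) (t κ : ℝ), 0 ≤ t →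
      ∑ R : Finset U, Real.exp (t * (∑ i ∈ R, c i r / L r) - κ) *
          ((∏ i ∈ R, x i) * ∏ i ∈ Rᶜ, (1 - x i))
        ≤ Real.exp ((Real.exp (t * ε^3) - 1) / ε^3 - κ) := by
    intro r t κ ht
    have ha : ∀ i, 0 ≤ c i r / L r ∧ c i r / L r ≤ ε^3 := fun i =>
      ⟨div_nonneg (hc i r) (hL r).le, by rw [div_le_iff₀ (hL r)]; exact hsmall i r⟩
    have hμ : ∑ i : U, x i * (c i r / L r) ≤ 1 := by
      have he : ∑ i : U, x i * (c i r / L r) = (∑ i : U, x i * c i r) / L r := by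
        rw [Finset.sum_div]
        exact Finset.sum_congr rfl fun i _ => (mul_div_assoc _ _ _).symm
      rw [he, div_le_one (hL r)]
      exact hbudget r
    calc ∑ R : Finset U, Real.exp (t * (∑ i ∈ R, c i r / L r) - κ) *
            ((∏ i ∈ R, x i) * ∏ i ∈ Rᶜ, (1 - x i))
        = Real.exp (-κ) * ∑ R : Finset U, Real.exp (t * ∑ i ∈ R, c i r / L r) *
            ((∏ i ∈ R, x i) * ∏ i ∈ Rᶜ, (1 - x i)) := by
          rw [Finset.mul_sum]
          apply Finset.sum_congr rfl
          intro R _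
          rw [show t * (∑ i ∈ R, c i r / L r) - κ =
            -κ + t * ∑ i ∈ R, c i r / L r from by ring, Real.exp_add, mul_assoc]
      _ = Real.exp (-κ) *
            ∏ i : U, (x i * Real.exp (t * (c i r / L r)) + (1 - x i)) := by
          rw [mgf_eq]
      _ ≤ Real.exp (-κ) * Real.exp ((Real.exp (t * ε^3) - 1) / ε^3) := by
          apply mul_le_mul_of_nonneg_left _ (Real.exp_pos _).le
          exact mgf_bound x (fun i => c i r / L r) (ε^3) t hx ha hε3 hμ ht
      _ = Real.exp ((Real.exp (t * ε^3) - 1) / ε^3 - κ) := by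
          rw [← Real.exp_add]; ring_nf
  -- numeric exponent bound 1
  have hle1 : lam * ε^3 = ε/2 := by rw [hlam]; field_simp
  have hnum1 : (Real.exp (lam * ε^3) - 1)/ε^3 - lam*(1+ε) ≤ -(5/(16*ε)) := by
    rw [hle1]
    have hq := exp_quad (ε/2) (by positivity) (by linarith)
    have key : (Real.exp (ε/2) - 1)/ε^3 ≤ 1/(2*ε^2) + 3/(16*ε) := by
      rw [div_le_iff₀ hε3]
      have e1 : (1/(2*ε^2) + 3/(16*ε))*ε^3 = ε/2 + 3/16*ε^2 := by
        field_simp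
      rw [e1]; nlinarith
    have e2 : lam*(1+ε) = 1/(2*ε^2) + 1/(2*ε) := by
      rw [hlam]; field_simp
    have e3 : 3/(16*ε) - 1/(2*ε) = -(5/(16*ε)) := by
      field_simp; ring
    linarith
  -- numeric exponent bound 2
  have hle2 : (lam + 1) * ε^3 = ε/2 + ε^3 := by rw [hlam]; field_simp
  have hx34 : ε/2 + ε^3 ≤ 3/4*ε := by nlinarith
  have hnum2 : (Real.exp ((lam+1) * ε^3) - 1)/ε^3 - (lam*(1+ε)+1) ≤ -(5/(64*ε)) := by
    rw [hle2]
    have hq := exp_quad (ε/2 + ε^3) (by positivity) (by nlinarith)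
    have key : (Real.exp (ε/2 + ε^3) - 1)/ε^3 ≤ 1/(2*ε^2) + 1 + 27/(64*ε) := by
      rw [div_le_iff₀ hε3]
      have e1 : (1/(2*ε^2) + 1 + 27/(64*ε))*ε^3 = ε/2 + ε^3 + 27/64*ε^2 := by
        field_simp
      rw [e1]
      nlinarith [sq_nonneg (ε/2 + ε^3), hx34, hε0]
    have e2 : lam*(1+ε) = 1/(2*ε^2) + 1/(2*ε) := by
      rw [hlam]; field_simp
    have e3 : 27/(64*ε) - 1/(2*ε) = -(5/(64*ε)) := by
      field_simp; ring
    linarith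
  -- tail bounds
  have hPr : ∀ r : Fin d,
      ∑ R : Finset U, Real.exp (lam * (∑ i ∈ R, c i r / L r) - lam*(1+ε)) *
          ((∏ i ∈ R, x i) * ∏ i ∈ Rᶜ, (1 - x i)) ≤ 41*ε^2 := by
    intro r
    refine (hmgfHelp r lam (lam*(1+ε)) hlam0.le).trans ?_
    refine (Real.exp_le_exp.2 hnum1).trans ?_
    have h1 := exp_neg_le_sq (5/(16*ε)) (by positivity)
    have e4 : 4/((5/(16*ε))^2) = (1024/25)*ε^2 := by field_simp; ring
    rw [e4] at h1
    nlinarith [sq_nonneg ε]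
  have hMs : ∀ s : Fin d,
      ∑ R : Finset U, Real.exp ((lam+1) * (∑ i ∈ R, c i s / L s) - (lam*(1+ε)+1)) *
          ((∏ i ∈ R, x i) * ∏ i ∈ Rᶜ, (1 - x i)) ≤ 13*ε := by
    intro s
    refine (hmgfHelp s (lam+1) (lam*(1+ε)+1) (by linarith)).trans ?_
    refine (Real.exp_le_exp.2 hnum2).trans ?_
    have h1 := exp_neg_le_inv (5/(64*ε)) (by positivity)
    have e4 : 1/(5/(64*ε)) = (64/5)*ε := by rw [one_div_div]; ring
    rw [e4] at h1
    linarith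
  -- structural bound on f
  have hstruct := structural_bound d f hsub hnn h0 c hc L hL
    (fun i r => le_trans (hsmall i r) (by nlinarith [hL r, (hL r).le] : ε^3 * L r ≤ L r))
    O hO
  -- pointwise bound for bad realizations
  have hpoint : ∀ R : Finset U,
      (if ∀ r, ∑ i ∈ R, c i r ≤ (1 + ε) * L r then 0 else f R) ≤
        ∑ r : Fin d, O * ((1+2*(d:ℝ)*(1+ε)) *
            Real.exp (lam * (∑ i ∈ R, c i r / L r) - lam*(1+ε)) +
          2 * ∑ s : Fin d,
            Real.exp ((lam+1) * (∑ i ∈ R, c i s / L s) - (lam*(1+ε)+1))) := by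
    intro R
    have hHnn : ∀ r : Fin d, 0 ≤ O * ((1+2*(d:ℝ)*(1+ε)) *
        Real.exp (lam * (∑ i ∈ R, c i r / L r) - lam*(1+ε)) +
        2 * ∑ s : Fin d,
          Real.exp ((lam+1) * (∑ i ∈ R, c i s / L s) - (lam*(1+ε)+1))) := by
      intro r
      apply mul_nonneg hO0
      apply add_nonneg
      · apply mul_nonneg (by nlinarith) (Real.exp_pos _).le
      · apply mul_nonneg (by norm_num)
        exact Finset.sum_nonneg fun s _ => (Real.exp_pos _).le
    by_cases hnear : ∀ r, ∑ i ∈ R, c i r ≤ (1 + ε) * L r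
    · rw [if_pos hnear]
      exact Finset.sum_nonneg fun r _ => hHnn r
    · rw [if_neg hnear]
      push_neg at hnear
      obtain ⟨r₀, hr₀⟩ := hnear
      have hdiv : ∀ r : Fin d, (∑ i ∈ R, c i r)/L r = ∑ i ∈ R, c i r / L r :=
        fun r => Finset.sum_div _ _ _
      -- E ≥ 1 at r₀
      have hY0 : 1 + ε ≤ ∑ i ∈ R, c i r₀ / L r₀ := by
        rw [← hdiv r₀]
        rw [le_div_iff₀ (hL r₀)]
        nlinarith [hr₀]
      have hE1 : 1 ≤ Real.exp (lam * (∑ i ∈ R, c i r₀ / L r₀) - lam*(1+ε)) := by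
        have harg : 0 ≤ lam * (∑ i ∈ R, c i r₀ / L r₀) - lam*(1+ε) := by
          nlinarith
        nlinarith [Real.add_one_le_exp (lam * (∑ i ∈ R, c i r₀ / L r₀) - lam*(1+ε))]
      -- per-coordinate bound Y_s ≤ (1+ε)E + Es
      have hYs : ∀ s : Fin d, (∑ i ∈ R, c i s / L s) ≤
          (1+ε) * Real.exp (lam * (∑ i ∈ R, c i r₀ / L r₀) - lam*(1+ε)) +
          Real.exp ((lam+1) * (∑ i ∈ R, c i s / L s) - (lam*(1+ε)+1)) := by
        intro s
        set Y := ∑ i ∈ R, c i s / L s with hY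
        by_cases hcase : Y ≤ 1 + ε
        · have h1 : Y ≤ (1+ε) * Real.exp (lam * (∑ i ∈ R, c i r₀ / L r₀) - lam*(1+ε)) := by
            nlinarith [hE1]
          nlinarith [(Real.exp_pos ((lam+1) * Y - (lam*(1+ε)+1))).le]
        · push_neg at hcase
          have h1 : Y ≤ Real.exp (Y - 1) := by
            nlinarith [Real.add_one_le_exp (Y - 1)]
          have h2 : Real.exp (Y - 1) ≤ Real.exp ((lam+1) * Y - (lam*(1+ε)+1)) := by
            apply Real.exp_le_exp.2
            nlinarith
          have h3 : 0 ≤ (1+ε) * Real.exp (lam * (∑ i ∈ R, c i r₀ / L r₀) - lam*(1+ε)) := by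
            positivity
          linarith
      -- combine
      have hsum : ∑ s : Fin d, (∑ i ∈ R, c i s / L s) ≤
          (d:ℝ) * ((1+ε) * Real.exp (lam * (∑ i ∈ R, c i r₀ / L r₀) - lam*(1+ε))) +
          ∑ s : Fin d, Real.exp ((lam+1) * (∑ i ∈ R, c i s / L s) - (lam*(1+ε)+1)) := by
        calc ∑ s : Fin d, (∑ i ∈ R, c i s / L s)
            ≤ ∑ s : Fin d, ((1+ε) * Real.exp (lam * (∑ i ∈ R, c i r₀ / L r₀) - lam*(1+ε)) +
                Real.exp ((lam+1) * (∑ i ∈ R, c i s / L s) - (lam*(1+ε)+1))) :=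
              Finset.sum_le_sum fun s _ => hYs s
          _ = _ := by
              rw [Finset.sum_add_distrib, Finset.sum_const, Finset.card_univ,
                Fintype.card_fin, nsmul_eq_mul]
      have hfR : f R ≤ O * ((1+2*(d:ℝ)*(1+ε)) *
          Real.exp (lam * (∑ i ∈ R, c i r₀ / L r₀) - lam*(1+ε)) +
          2 * ∑ s : Fin d,
            Real.exp ((lam+1) * (∑ i ∈ R, c i s / L s) - (lam*(1+ε)+1))) := by
        have h1 := hstruct R
        have h2 : ∑ r : Fin d, (∑ i ∈ R, c i r) / L r = ∑ s : Fin d, (∑ i ∈ R, c i s / L s) :=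
          Finset.sum_congr rfl fun r _ => hdiv r
        rw [h2] at h1
        refine h1.trans ?_
        apply mul_le_mul_of_nonneg_left _ hO0
        nlinarith [hsum, hE1]
      refine hfR.trans ?_
      exact Finset.single_le_sum (fun r _ => hHnn r) (Finset.mem_univ r₀)
  -- split mulExt into near + far parts
  have hsplitF : mulExt f x =
      (∑ R : Finset U, (if ∀ r, ∑ i ∈ R, c i r ≤ (1 + ε) * L r then f R else 0) *
        ((∏ i ∈ R, x i) * ∏ i ∈ Rᶜ, (1 - x i))) +
      (∑ R : Finset U, (if ∀ r, ∑ i ∈ R, c i r ≤ (1 + ε) * L r then 0 else f R) *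
        ((∏ i ∈ R, x i) * ∏ i ∈ Rᶜ, (1 - x i))) := by
    unfold mulExt
    rw [← Finset.sum_add_distrib]
    apply Finset.sum_congr rfl
    intro R _
    by_cases h : ∀ r, ∑ i ∈ R, c i r ≤ (1 + ε) * L r <;> simp [h]
  -- bound the bad part
  have hbad : (∑ R : Finset U, (if ∀ r, ∑ i ∈ R, c i r ≤ (1 + ε) * L r then 0 else f R) *
        ((∏ i ∈ R, x i) * ∏ i ∈ Rᶜ, (1 - x i))) ≤
      2000 * ((d:ℝ)+1)^2 * ε * mulExt f x := by
    have step1 : (∑ R : Finset U, (if ∀ r, ∑ i ∈ R, c i r ≤ (1 + ε) * L r then 0 else f R) *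
          ((∏ i ∈ R, x i) * ∏ i ∈ Rᶜ, (1 - x i))) ≤
        ∑ R : Finset U, (∑ r : Fin d, O * ((1+2*(d:ℝ)*(1+ε)) *
            Real.exp (lam * (∑ i ∈ R, c i r / L r) - lam*(1+ε)) +
          2 * ∑ s : Fin d,
            Real.exp ((lam+1) * (∑ i ∈ R, c i s / L s) - (lam*(1+ε)+1)))) *
          ((∏ i ∈ R, x i) * ∏ i ∈ Rᶜ, (1 - x i)) :=
      Finset.sum_le_sum fun R _ => mul_le_mul_of_nonneg_right (hpoint R) (hw R)
    refine step1.trans ?_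
    have swap1 : ∑ R : Finset U, (∑ r : Fin d, O * ((1+2*(d:ℝ)*(1+ε)) *
            Real.exp (lam * (∑ i ∈ R, c i r / L r) - lam*(1+ε)) +
          2 * ∑ s : Fin d,
            Real.exp ((lam+1) * (∑ i ∈ R, c i s / L s) - (lam*(1+ε)+1)))) *
          ((∏ i ∈ R, x i) * ∏ i ∈ Rᶜ, (1 - x i))
        = ∑ r : Fin d, ∑ R : Finset U, (O * ((1+2*(d:ℝ)*(1+ε)) *
            Real.exp (lam * (∑ i ∈ R, c i r / L r) - lam*(1+ε)) +
          2 * ∑ s : Fin d,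
            Real.exp ((lam+1) * (∑ i ∈ R, c i s / L s) - (lam*(1+ε)+1)))) *
          ((∏ i ∈ R, x i) * ∏ i ∈ Rᶜ, (1 - x i)) := by
      rw [← Finset.sum_comm]
      apply Finset.sum_congr rfl
      intro R _
      rw [Finset.sum_mul]
    rw [swap1]
    have per_r : ∀ r : Fin d, ∑ R : Finset U, (O * ((1+2*(d:ℝ)*(1+ε)) *
            Real.exp (lam * (∑ i ∈ R, c i r / L r) - lam*(1+ε)) +
          2 * ∑ s : Fin d,
            Real.exp ((lam+1) * (∑ i ∈ R, c i s / L s) - (lam*(1+ε)+1)))) *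
          ((∏ i ∈ R, x i) * ∏ i ∈ Rᶜ, (1 - x i))
        ≤ O * ((1+2*(d:ℝ)*(1+ε))*(41*ε^2) + 2*((d:ℝ)*(13*ε))) := by
      intro r
      have expand := sum_expand (U:=U) (K:=Fin d) O (1+2*(d:ℝ)*(1+ε))
        (fun R => Real.exp (lam * (∑ i ∈ R, c i r / L r) - lam*(1+ε)))
        (fun s R => Real.exp ((lam+1) * (∑ i ∈ R, c i s / L s) - (lam*(1+ε)+1)))
        (fun R => (∏ i ∈ R, x i) * ∏ i ∈ Rᶜ, (1 - x i))
      rw [expand]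
      have h1 : O * (1+2*(d:ℝ)*(1+ε)) *
              (∑ R : Finset U, Real.exp (lam * (∑ i ∈ R, c i r / L r) - lam*(1+ε)) *
                ((∏ i ∈ R, x i) * ∏ i ∈ Rᶜ, (1 - x i)))
          ≤ O * (1+2*(d:ℝ)*(1+ε)) * (41*ε^2) := by
        apply mul_le_mul_of_nonneg_left (hPr r)
        apply mul_nonneg hO0 (by nlinarith)
      have h2 : 2 * O * (∑ s : Fin d, ∑ R : Finset U,
              Real.exp ((lam+1) * (∑ i ∈ R, c i s / L s) - (lam*(1+ε)+1)) *
                ((∏ i ∈ R, x i) * ∏ i ∈ Rᶜ, (1 - x i)))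
          ≤ 2 * O * ((d:ℝ)*(13*ε)) := by
        apply mul_le_mul_of_nonneg_left _ (by linarith : (0:ℝ) ≤ 2 * O)
        calc ∑ s : Fin d, ∑ R : Finset U,
              Real.exp ((lam+1) * (∑ i ∈ R, c i s / L s) - (lam*(1+ε)+1)) *
                ((∏ i ∈ R, x i) * ∏ i ∈ Rᶜ, (1 - x i))
            ≤ ∑ _s : Fin d, 13*ε := Finset.sum_le_sum fun s _ => hMs s
          _ = (d:ℝ)*(13*ε) := by
              rw [Finset.sum_const, Finset.card_univ, Fintype.card_fin, nsmul_eq_mul]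
      calc O * (1+2*(d:ℝ)*(1+ε)) *
              (∑ R : Finset U, Real.exp (lam * (∑ i ∈ R, c i r / L r) - lam*(1+ε)) *
                ((∏ i ∈ R, x i) * ∏ i ∈ Rᶜ, (1 - x i))) +
            2 * O * ∑ s : Fin d, ∑ R : Finset U,
              Real.exp ((lam+1) * (∑ i ∈ R, c i s / L s) - (lam*(1+ε)+1)) *
                ((∏ i ∈ R, x i) * ∏ i ∈ Rᶜ, (1 - x i))
          ≤ O * (1+2*(d:ℝ)*(1+ε)) * (41*ε^2) + 2 * O * ((d:ℝ)*(13*ε)) := add_le_add h1 h2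
        _ = O * ((1+2*(d:ℝ)*(1+ε))*(41*ε^2) + 2*((d:ℝ)*(13*ε))) := by ring
    calc ∑ r : Fin d, ∑ R : Finset U, (O * ((1+2*(d:ℝ)*(1+ε)) *
            Real.exp (lam * (∑ i ∈ R, c i r / L r) - lam*(1+ε)) +
          2 * ∑ s : Fin d,
            Real.exp ((lam+1) * (∑ i ∈ R, c i s / L s) - (lam*(1+ε)+1)))) *
          ((∏ i ∈ R, x i) * ∏ i ∈ Rᶜ, (1 - x i))
        ≤ ∑ _r : Fin d, O * ((1+2*(d:ℝ)*(1+ε))*(41*ε^2) + 2*((d:ℝ)*(13*ε))) :=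
          Finset.sum_le_sum fun r _ => per_r r
      _ = (d:ℝ) * (O * ((1+2*(d:ℝ)*(1+ε))*(41*ε^2) + 2*((d:ℝ)*(13*ε)))) := by
          rw [Finset.sum_const, Finset.card_univ, Fintype.card_fin, nsmul_eq_mul]
      _ ≤ (d:ℝ) * (O * (ε*(21 + 89*(d:ℝ)))) := by
          have hinner : (1+2*(d:ℝ)*(1+ε))*(41*ε^2) + 2*((d:ℝ)*(13*ε)) ≤ ε*(21 + 89*(d:ℝ)) := by
            nlinarith [mul_nonneg (mul_nonneg (by linarith : (0:ℝ) ≤ (d:ℝ)) hε0.le)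
              (by linarith : (0:ℝ) ≤ 1/2 - ε), mul_nonneg hε0.le (by linarith : (0:ℝ) ≤ 1/2 - ε),
              mul_nonneg (mul_nonneg (by linarith : (0:ℝ) ≤ (d:ℝ)) (mul_nonneg hε0.le hε0.le))
              (by linarith : (0:ℝ) ≤ 1/2 - ε)]
          have : O * ((1+2*(d:ℝ)*(1+ε))*(41*ε^2) + 2*((d:ℝ)*(13*ε))) ≤ O * (ε*(21 + 89*(d:ℝ))) :=
            mul_le_mul_of_nonneg_left hinner hO0
          apply mul_le_mul_of_nonneg_left this (by linarith : (0:ℝ) ≤ (d:ℝ))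
      _ ≤ (d:ℝ) * ((5 * mulExt f x) * (ε*(21 + 89*(d:ℝ)))) := by
          apply mul_le_mul_of_nonneg_left _ (by linarith : (0:ℝ) ≤ (d:ℝ))
          apply mul_le_mul_of_nonneg_right hOF
          have : (0:ℝ) ≤ 21 + 89*(d:ℝ) := by linarith
          positivity
      _ = (5*(d:ℝ)*(21 + 89*(d:ℝ))) * (ε * mulExt f x) := by ring
      _ ≤ (2000*((d:ℝ)+1)^2) * (ε * mulExt f x) := by
          apply mul_le_mul_of_nonneg_right _ (mul_nonneg hε0.le hF0)
          nlinarith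
      _ = 2000 * ((d:ℝ)+1)^2 * ε * mulExt f x := by ring
  have hexp : (1 - 2000*((d:ℝ)+1)^2*ε) * mulExt f x
      = mulExt f x - 2000*((d:ℝ)+1)^2*ε*mulExt f x := by ring
  rw [hexp]
  linarith [hbad, hsplitF]
end

section
/- Let d ≥ 1 be a natural number, let U be a finite type, let f : Finset U → ℝ be a nonnegative submodular set function, let c : U → ℝ^d with c_r(i) ≥ 0, let L ∈ ℝ^d with L_r > 0, and let 0 < ε < 1/4. Assume every element of U is small, i.e., c_r(i) ≤ ε³·L_r for all i ∈ U and all r. Then every ε-nearly feasible set S ⊆ U (i.e., c_r(S) ≤ (1+ε)·L_r for all r) contains a subset S' ⊆ S that is feasible (c_r(S') ≤ L_r for all r) and satisfies f(S') ≥ (1 − 4ε)^d · f(S). -/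
open Finset

/-- Fix one knapsack dimension while losing at most a `(1 - 4ε)` factor. -/
lemma fix_one_dim {U : Type*} [Fintype U] [DecidableEq U]
    (f : Finset U → ℝ)
    (hsub : ∀ S T : Finset U, f (S ∪ T) + f (S ∩ T) ≤ f S + f T)
    (hnonneg : ∀ S : Finset U, 0 ≤ f S)
    (w : U → ℝ) (hw : ∀ i, 0 ≤ w i)
    (L : ℝ) (hL : 0 < L)
    (ε : ℝ) (hε : 0 < ε) (hε1 : ε < 1 / 4)
    (hsmall : ∀ i, w i ≤ ε ^ 3 * L)
    (S : Finset U) (hnf : ∑ i ∈ S, w i ≤ (1 + ε) * L) :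
    ∃ S' ⊆ S, ∑ i ∈ S', w i ≤ L ∧ (1 - 4 * ε) * f S ≤ f S' := by
  classical
  by_cases hWL : ∑ i ∈ S, w i ≤ L
  · exact ⟨S, Finset.Subset.refl S, hWL, by nlinarith [hnonneg S]⟩
  push_neg at hWL
  set W := ∑ i ∈ S, w i with hW
  set l := S.toList with hl
  set n := l.length with hn
  set P : ℕ → Finset U := fun m => (l.take m).toFinset with hP
  set p : ℕ → ℝ := fun m => ∑ i ∈ P m, w i with hp
  have hPS : ∀ m, P m ⊆ S := by
    intro m x hx
    have : x ∈ l := List.take_subset m l (List.mem_toFinset.1 hx)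
    rwa [hl, Finset.mem_toList] at this
  have hPn : P n = S := by
    simp only [hP, hn, List.take_length]
    rw [hl]; exact S.toList_toFinset
  have hpn : p n = W := by rw [hp]; simp only; rw [hPn]
  have hPmono : ∀ ⦃m m' : ℕ⦄, m ≤ m' → P m ⊆ P m' := by
    intro m m' hmm x hx
    have h1 : l.take m = (l.take m').take m := by
      rw [List.take_take, Nat.min_eq_left hmm]
    rw [hP] at hx ⊢
    simp only [List.mem_toFinset] at hx ⊢
    rw [h1] at hx
    exact List.take_subset m _ hx
  have hpmono : ∀ ⦃m m' : ℕ⦄, m ≤ m' → p m ≤ p m' := fun m m' hmm =>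
    Finset.sum_le_sum_of_subset_of_nonneg (hPmono hmm) (fun i _ _ => hw i)
  have hp0 : p 0 = 0 := by simp [hp, hP]
  have hε3L : 0 ≤ ε ^ 3 * L := by positivity
  have hstep : ∀ m, p (m + 1) ≤ p m + ε ^ 3 * L := by
    intro m
    have ht : l.take (m + 1) = l.take m ++ (l[m]?).toList := List.take_succ
    rcases h : l[m]? with _ | a
    · have : p (m + 1) = p m := by
        simp only [hp, hP, ht, h, Option.toList_none, List.append_nil]
      linarith
    · have hPm1 : P (m + 1) = insert a (P m) := by
        simp only [hP, ht, h, Option.toList_some, List.toFinset_append,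
          List.toFinset_cons, List.toFinset_nil, insert_empty_eq]
        rw [Finset.union_comm, ← Finset.insert_eq]
      by_cases ha : a ∈ P m
      · have : p (m + 1) = p m := by
          simp only [hp]; rw [hPm1, Finset.insert_eq_self.2 ha]
        linarith
      · have : p (m + 1) = w a + p m := by
          simp only [hp]; rw [hPm1, Finset.sum_insert ha]
        rw [this]
        have := hsmall a
        linarith
  -- number of chunks
  set k : ℕ := ⌈1 / (4 * ε)⌉₊ with hk
  have hkpos : 0 < (1:ℝ) / (4 * ε) := by positivity
  have hkge : 1 / (4 * ε) ≤ (k : ℝ) := Nat.le_ceil _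
  have hklt : (k : ℝ) < 1 / (4 * ε) + 1 := Nat.ceil_lt_add_one (le_of_lt hkpos)
  have hk1 : 1 ≤ k := by
    rw [hk]
    exact Nat.one_le_ceil_iff.2 hkpos
  have hkpos' : 0 < (k : ℝ) := by positivity
  have hkL : (k : ℝ) * (ε + ε ^ 3) ≤ 1 := by
    have h1 : (k : ℝ) * (4 * ε) < 1 + 4 * ε := by
      have := mul_lt_mul_of_pos_right hklt (by positivity : (0:ℝ) < 4 * ε)
      rw [add_mul, div_mul_cancel₀] at this
      · linarith
      · positivity
    have h2 : (k : ℝ) * ε < (1 + 4 * ε) / 4 := by linarith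
    have h3 : ε ^ 2 < 1 / 16 := by nlinarith
    nlinarith [h2, h3, mul_pos hkpos' hε, sq_nonneg ε]
  -- the greedy thresholds
  have hex : ∀ j : ℕ, ∃ t : ℕ, (j : ℝ) * ((ε + ε ^ 3) * L) ≤ p t ∨ n ≤ t :=
    fun j => ⟨n, Or.inr le_rfl⟩
  set m : ℕ → ℕ := fun j => Nat.find (hex j) with hm
  have hτnonneg : ∀ j : ℕ, 0 ≤ (j : ℝ) * ((ε + ε ^ 3) * L) := by
    intro j; positivity
  have hτk : ∀ j : ℕ, j ≤ k → (j : ℝ) * ((ε + ε ^ 3) * L) ≤ L := by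
    intro j hj
    have hjk : (j : ℝ) ≤ (k : ℝ) := by exact_mod_cast hj
    have : (j : ℝ) * (ε + ε ^ 3) ≤ (k : ℝ) * (ε + ε ^ 3) := by nlinarith
    calc (j : ℝ) * ((ε + ε ^ 3) * L) = (j : ℝ) * (ε + ε ^ 3) * L := by ring
      _ ≤ 1 * L := by nlinarith
      _ = L := one_mul L
  have hmn : ∀ j, m j ≤ n := fun j => Nat.find_le (Or.inr le_rfl)
  have hmlow : ∀ j : ℕ, j ≤ k → (j : ℝ) * ((ε + ε ^ 3) * L) ≤ p (m j) := by
    intro j hj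
    rcases Nat.find_spec (hex j) with h | h
    · exact h
    · have : m j = n := le_antisymm (hmn j) h
      rw [this, hpn]
      exact le_trans (hτk j hj) (le_of_lt hWL)
  have hmmono : ∀ ⦃j j' : ℕ⦄, j ≤ j' → m j ≤ m j' := by
    intro j j' hjj
    refine Nat.find_mono ?_
    intro t ht
    rcases ht with h | h
    · left
      refine le_trans ?_ h
      have : (j : ℝ) ≤ (j' : ℝ) := by exact_mod_cast hjj
      nlinarith [hτnonneg 1, hL, hε]
    · exact Or.inr h
  have hmup : ∀ j : ℕ, p (m j) ≤ (j : ℝ) * ((ε + ε ^ 3) * L) + ε ^ 3 * L := by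
    intro j
    by_cases hmj : m j = 0
    · rw [hmj, hp0]
      have := hτnonneg j
      linarith
    · obtain ⟨t, ht⟩ := Nat.exists_eq_succ_of_ne_zero hmj
      have hlt : t < m j := by omega
      have hmin := Nat.find_min (hex j) hlt
      push_neg at hmin
      obtain ⟨h1, _⟩ := hmin
      have := hstep t
      rw [ht]
      linarith
  have hm0 : m 0 = 0 := by
    rw [hm]
    simp only
    rw [Nat.find_eq_zero]
    left
    rw [hp0]
    norm_num
  -- the chain
  set A : ℕ → Finset U := fun j => if j < k then P (m j) else S with hA
  have hA0 : A 0 = ∅ := by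
    rw [hA]
    simp only [hk1, Nat.lt_of_lt_of_le Nat.zero_lt_one hk1, if_true, hm0]
    simp [hP]
  have hAk : A k = S := by rw [hA]; simp
  have hAS : ∀ j, A j ⊆ S := by
    intro j; rw [hA]; dsimp only
    split
    · exact hPS _
    · exact Finset.Subset.refl S
  have hAmono : ∀ j, A j ⊆ A (j + 1) := by
    intro j
    rw [hA]; dsimp only
    by_cases h1 : j + 1 < k
    · rw [if_pos (by omega), if_pos h1]
      exact hPmono (hmmono (Nat.le_succ j))
    · rw [if_neg h1]
      split
      · exact hPS _
      · exact Finset.Subset.refl S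
  set q : ℕ → ℝ := fun j => ∑ i ∈ A j, w i with hq
  have hqk : q k = W := by rw [hq]; simp only; rw [hAk]
  have hchunk : ∀ j, j < k → ε * L + q j ≤ q (j + 1) := by
    intro j hj
    have hqj : q j ≤ (j : ℝ) * ((ε + ε ^ 3) * L) + ε ^ 3 * L := by
      rw [hq, hA]; simp only [if_pos hj]
      exact hmup j
    have hτsucc : ((j : ℝ) + 1) * ((ε + ε ^ 3) * L) =
        (j : ℝ) * ((ε + ε ^ 3) * L) + (ε + ε ^ 3) * L := by ring
    have hq1 : ((j + 1 : ℕ) : ℝ) * ((ε + ε ^ 3) * L) ≤ q (j + 1) := by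
      by_cases h1 : j + 1 < k
      · rw [hq, hA]; simp only [if_pos h1]
        exact hmlow (j + 1) (le_of_lt h1)
      · have hjk : j + 1 = k := by omega
        rw [hq, hA]; simp only [if_neg h1, ← hW]
        exact le_trans (hτk (j + 1) (by omega)) (le_of_lt hWL)
    push_cast at hq1
    rw [hτsucc] at hq1
    linarith
  set B : ℕ → Finset U := fun j => A (j + 1) \ A j with hB
  have hBdef : ∀ (x : U) (j : ℕ), x ∈ B j ↔ x ∈ A (j + 1) ∧ x ∉ A j := by
    intro x j; rw [hB]; exact Finset.mem_sdiff
  have hBsum : ∀ j, ∑ i ∈ B j, w i = q (j + 1) - q j := by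
    intro j
    rw [hB]; dsimp only
    exact Finset.sum_sdiff_eq_sub (hAmono j)
  have hterm : ∀ j, f S - f (S \ B j) ≤ f (A (j + 1)) - f (A j) := by
    intro j
    have hu : (S \ B j) ∪ A (j + 1) = S := by
      ext x
      simp only [Finset.mem_union, Finset.mem_sdiff, hBdef]
      constructor
      · rintro (⟨hx, _⟩ | hx)
        · exact hx
        · exact hAS (j + 1) hx
      · intro hx
        by_cases h1 : x ∈ A (j + 1)
        · exact Or.inr h1
        · exact Or.inl ⟨hx, fun h2 => h1 h2.1⟩
    have hi : (S \ B j) ∩ A (j + 1) = A j := by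
      ext x
      simp only [Finset.mem_inter, Finset.mem_sdiff, hBdef]
      constructor
      · rintro ⟨⟨_, hx2⟩, hx3⟩
        by_contra h
        exact hx2 ⟨hx3, h⟩
      · intro hx
        have h1 : x ∈ A (j + 1) := hAmono j hx
        exact ⟨⟨hAS j hx, fun h2 => h2.2 hx⟩, h1⟩
    have := hsub (S \ B j) (A (j + 1))
    rw [hu, hi] at this
    linarith
  have hsum : ∑ j ∈ Finset.range k, (f S - f (S \ B j)) ≤ f S := by
    calc ∑ j ∈ Finset.range k, (f S - f (S \ B j))
        ≤ ∑ j ∈ Finset.range k, (f (A (j + 1)) - f (A j)) :=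
          Finset.sum_le_sum (fun j _ => hterm j)
      _ = f (A k) - f (A 0) := Finset.sum_range_sub (fun j => f (A j)) k
      _ = f S - f ∅ := by rw [hAk, hA0]
      _ ≤ f S := by linarith [hnonneg (∅ : Finset U)]
  have hexj : ∃ j ∈ Finset.range k, f S - f (S \ B j) ≤ f S / k := by
    by_contra h
    push_neg at h
    have hne : (Finset.range k).Nonempty := ⟨0, Finset.mem_range.2 (by omega)⟩
    have hlt := Finset.sum_lt_sum_of_nonempty hne (fun j hj => h j hj)
    rw [Finset.sum_const, Finset.card_range, nsmul_eq_mul,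
      mul_div_cancel₀ _ (ne_of_gt hkpos')] at hlt
    linarith
  obtain ⟨j, hjk, hjf⟩ := hexj
  rw [Finset.mem_range] at hjk
  refine ⟨S \ B j, Finset.sdiff_subset, ?_, ?_⟩
  · have hBS : B j ⊆ S := fun x hx => hAS (j + 1) (Finset.mem_sdiff.1 hx).1
    rw [Finset.sum_sdiff_eq_sub hBS, hBsum j, ← hW]
    have := hchunk j hjk
    linarith
  · have h1k : 1 ≤ 4 * ε * (k : ℝ) := by
      rw [div_le_iff₀ (by positivity : (0:ℝ) < 4 * ε)] at hkge
      linarith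
    have h4 : f S / (k : ℝ) ≤ 4 * ε * f S := by
      rw [div_le_iff₀ hkpos']
      calc f S = 1 * f S := (one_mul _).symm
        _ ≤ (4 * ε * (k : ℝ)) * f S := mul_le_mul_of_nonneg_right h1k (hnonneg S)
        _ = 4 * ε * f S * (k : ℝ) := by ring
    linarith

/-- Fix a list of dimensions one at a time. -/
lemma fix_list_dims {U : Type*} [Fintype U] [DecidableEq U]
    (d : ℕ)
    (f : Finset U → ℝ)
    (hsub : ∀ S T : Finset U, f (S ∪ T) + f (S ∩ T) ≤ f S + f T)
    (hnonneg : ∀ S : Finset U, 0 ≤ f S)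
    (c : U → Fin d → ℝ) (hc : ∀ i r, 0 ≤ c i r)
    (L : Fin d → ℝ) (hL : ∀ r, 0 < L r)
    (ε : ℝ) (hε : 0 < ε) (hε1 : ε < 1 / 4)
    (hsmall : ∀ (i : U) (r : Fin d), c i r ≤ ε ^ 3 * L r) :
    ∀ (rs : List (Fin d)) (S : Finset U),
      (∀ r, ∑ i ∈ S, c i r ≤ (1 + ε) * L r) →
      ∃ S' ⊆ S, (∀ r ∈ rs, ∑ i ∈ S', c i r ≤ L r) ∧
        (∀ r, ∑ i ∈ S', c i r ≤ (1 + ε) * L r) ∧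
        (1 - 4 * ε) ^ rs.length * f S ≤ f S' := by
  intro rs
  induction rs with
  | nil =>
    intro S hS
    exact ⟨S, Finset.Subset.refl S, fun r hr => absurd hr (List.not_mem_nil (a := r)),
      hS, by simp⟩
  | cons r rs ih =>
    intro S hS
    obtain ⟨S₁, hS₁S, hS₁r, hS₁f⟩ := fix_one_dim f hsub hnonneg (fun i => c i r)
      (fun i => hc i r) (L r) (hL r) ε hε hε1 (fun i => hsmall i r) S (hS r)
    have hS₁nf : ∀ r', ∑ i ∈ S₁, c i r' ≤ (1 + ε) * L r' := fun r' =>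
      le_trans (Finset.sum_le_sum_of_subset_of_nonneg hS₁S (fun i _ _ => hc i r'))
        (hS r')
    obtain ⟨S', hS'S₁, hS'rs, hS'nf, hS'f⟩ := ih S₁ hS₁nf
    have hsubSum : ∀ r', ∑ i ∈ S', c i r' ≤ ∑ i ∈ S₁, c i r' := fun r' =>
      Finset.sum_le_sum_of_subset_of_nonneg hS'S₁ (fun i _ _ => hc i r')
    refine ⟨S', hS'S₁.trans hS₁S, ?_, hS'nf, ?_⟩
    · intro r' hr'
      rcases List.mem_cons.1 hr' with h | h
      · subst h
        exact le_trans (hsubSum r') hS₁r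
      · exact hS'rs r' h
    · have hpow : (0:ℝ) ≤ (1 - 4 * ε) ^ rs.length := by
        apply pow_nonneg; linarith
      calc (1 - 4 * ε) ^ (r :: rs).length * f S
          = (1 - 4 * ε) ^ rs.length * ((1 - 4 * ε) * f S) := by
            rw [List.length_cons]; ring
        _ ≤ (1 - 4 * ε) ^ rs.length * f S₁ :=
            mul_le_mul_of_nonneg_left hS₁f hpow
        _ ≤ f S' := hS'f

theorem nearly_feasible_fix_small_elements
    {U : Type*} [Fintype U] [DecidableEq U]
    (d : ℕ) (hd : 1 ≤ d)
    (f : Finset U → ℝ)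
    (hsub : ∀ S T : Finset U, f (S ∪ T) + f (S ∩ T) ≤ f S + f T)
    (hnonneg : ∀ S : Finset U, 0 ≤ f S)
    (c : U → Fin d → ℝ) (hc : ∀ i r, 0 ≤ c i r)
    (L : Fin d → ℝ) (hL : ∀ r, 0 < L r)
    (ε : ℝ) (hε : 0 < ε) (hε1 : ε < 1 / 4)
    (hsmall : ∀ (i : U) (r : Fin d), c i r ≤ ε ^ 3 * L r)
    (S : Finset U)
    (hnf : ∀ r, ∑ i ∈ S, c i r ≤ (1 + ε) * L r) :
    ∃ S' ⊆ S, (∀ r, ∑ i ∈ S', c i r ≤ L r) ∧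
      (1 - 4 * ε) ^ d * f S ≤ f S' := by
  obtain ⟨S', hS'S, hS'r, _, hS'f⟩ := fix_list_dims d f hsub hnonneg c hc L hL
    ε hε hε1 hsmall (List.finRange d) S hnf
  refine ⟨S', hS'S, fun r => hS'r r (List.mem_finRange r), ?_⟩
  rwa [List.length_finRange] at hS'f
end

section
/- For every natural number d ≥ 1 there exists a constant C > 0 (depending only on d) such that the following holds. Let U be a finite type, let f : Finset U → ℝ be a nonnegative submodular set function with f(∅) = 0, let c : U → ℝ^d with c_r(i) ≥ 0, let L ∈ ℝ^d with L_r > 0, and let 0 < ε < 1. Assume every element of U is small, i.e., c_r(i) ≤ ε³·L_r for all i ∈ U and all r. Let 𝒪 = max { f(T) : T ⊆ U feasible }, and let x ∈ [0,1]^U satisfy Σ_{i∈U} x_i·c_r(i) ≤ L_r for all r and F(x) ≥ 𝒪/5, where F is the extension by expectation of f. Then there exists a set D ⊆ U with {i : x_i = 1} ⊆ D ⊆ {i : x_i > 0} (a realization of positive probability of the random set D ~ x) such that D is ε-nearly feasible and f(D) ≥ (1 − C·ε)·F(x). -/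
open Finset

lemma lemA {U : Type} [Fintype U] [DecidableEq U] (x g : U → ℝ) :
    ∑ R : Finset U, ((∏ i ∈ R, x i) * ∏ i ∈ Rᶜ, (1 - x i)) * ∏ i ∈ R, g i
      = ∏ i : U, (x i * g i + (1 - x i)) := by
  rw [Finset.prod_add]
  rw [Finset.powerset_univ]
  apply Finset.sum_congr rfl
  intro R _
  rw [Finset.prod_mul_distrib, Finset.compl_eq_univ_sdiff]
  ring

lemma lemB {U : Type} [Fintype U] [DecidableEq U] (x g : U → ℝ)
    (hx0 : ∀ i, 0 ≤ x i) (hg1 : ∀ i, 1 ≤ g i) (i0 : U) :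
    ∑ R : Finset U, (if i0 ∈ R then ((∏ i ∈ R, x i) * ∏ i ∈ Rᶜ, (1 - x i)) * ∏ i ∈ R, g i else 0)
      ≤ x i0 * g i0 * ∏ i : U, (x i * g i + (1 - x i)) := by
  classical
  set g' : U → ℝ := Function.update g i0 0 with hg'
  have h1 : ∀ i, (1:ℝ) ≤ x i * g i + (1 - x i) := by
    intro i; nlinarith [hx0 i, hg1 i]
  have hP0 : (0:ℝ) ≤ ∏ i ∈ Finset.univ.erase i0, (x i * g i + (1 - x i)) :=
    Finset.prod_nonneg (fun i _ => le_trans zero_le_one (h1 i))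
  have hx0g : 0 ≤ x i0 * g i0 := mul_nonneg (hx0 i0) (le_trans zero_le_one (hg1 i0))
  have hsplit : ∀ R : Finset U,
      (if i0 ∈ R then ((∏ i ∈ R, x i) * ∏ i ∈ Rᶜ, (1 - x i)) * ∏ i ∈ R, g i else 0)
      = ((∏ i ∈ R, x i) * ∏ i ∈ Rᶜ, (1 - x i)) * ∏ i ∈ R, g i
        - ((∏ i ∈ R, x i) * ∏ i ∈ Rᶜ, (1 - x i)) * ∏ i ∈ R, g' i := by
    intro R
    by_cases h : i0 ∈ R
    · simp only [h, if_pos]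
      have : ∏ i ∈ R, g' i = 0 := Finset.prod_eq_zero h (by simp [hg'])
      rw [this]; ring
    · simp only [h, if_neg, not_false_iff]
      have : ∏ i ∈ R, g' i = ∏ i ∈ R, g i := by
        apply Finset.prod_congr rfl
        intro i hi
        have : i ≠ i0 := fun he => h (he ▸ hi)
        simp [hg', Function.update_of_ne this]
      rw [this]; ring
  rw [Finset.sum_congr rfl (fun R _ => hsplit R), Finset.sum_sub_distrib, lemA, lemA]
  have herase : ∀ h : U → ℝ, ∏ i : U, (x i * h i + (1 - x i))
      = (x i0 * h i0 + (1 - x i0)) * ∏ i ∈ Finset.univ.erase i0, (x i * h i + (1 - x i)) := by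
    intro h
    rw [← Finset.mul_prod_erase Finset.univ _ (Finset.mem_univ i0)]
  have hgg' : ∏ i ∈ Finset.univ.erase i0, (x i * g' i + (1 - x i))
      = ∏ i ∈ Finset.univ.erase i0, (x i * g i + (1 - x i)) := by
    apply Finset.prod_congr rfl
    intro i hi
    have : i ≠ i0 := (Finset.mem_erase.mp hi).1
    simp [hg', Function.update_of_ne this]
  rw [herase g, herase g', hgg']
  simp only [hg', Function.update_self, mul_zero, zero_add]
  nlinarith [h1 i0, hP0, mul_nonneg hx0g hP0]

lemma lemConv {t M a : ℝ} (ht : 0 ≤ t) (hM : 0 < M) (ha : 0 ≤ a) (haM : a ≤ M) :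
    Real.exp (t * a) ≤ 1 + (a / M) * (Real.exp (t * M) - 1) := by
  have h := convexOn_exp.2 (Set.mem_univ (0:ℝ)) (Set.mem_univ (t*M))
    (show (0:ℝ) ≤ 1 - a / M by
      have : a/M ≤ 1 := (div_le_one hM).mpr haM; linarith)
    (show (0:ℝ) ≤ a / M from div_nonneg ha hM.le)
    (show (1 - a / M) + a / M = 1 by ring)
  have harg : (1 - a/M) • (0:ℝ) + (a/M) • (t*M) = t * a := by
    simp only [smul_eq_mul]
    field_simp [hM.ne']
    ring
  rw [harg] at h
  simp only [smul_eq_mul, Real.exp_zero] at h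
  nlinarith [h]

lemma lemNum {ε : ℝ} (h0 : 0 < ε) (h2 : ε ≤ 1/2) :
    Real.exp ((Real.exp ε - 1) / ε ^ 3 - (1 + ε) / ε ^ 2) ≤ 4 * ε := by
  have hb := Real.exp_bound (x := ε) (by rw [abs_of_pos h0]; linarith) (n := 2) (by norm_num)
  have hsum : ∑ i ∈ Finset.range 2, ε ^ i / (Nat.factorial i) = 1 + ε := by
    simp [Finset.sum_range_succ, Nat.factorial]
  rw [hsum, abs_of_pos h0] at hb
  norm_num at hb
  have hexp : Real.exp ε - 1 - ε ≤ 3/4 * ε^2 := by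
    have := abs_le.mp hb
    nlinarith [this.2]
  have hne : ε ≠ 0 := ne_of_gt h0
  have harg : (Real.exp ε - 1) / ε ^ 3 - (1 + ε) / ε ^ 2 ≤ -(1/(4*ε)) := by
    have e1 : (Real.exp ε - 1) / ε ^ 3 - (1 + ε) / ε ^ 2
        = (Real.exp ε - 1 - ε - ε^2) / ε^3 := by field_simp; ring
    have e2 : -(1/(4*ε)) = (-(1/4)*ε^2)/ε^3 := by field_simp
    rw [e1, e2]
    apply div_le_div_of_nonneg_right ?_ (le_of_lt (pow_pos h0 3)) |>.trans_eq rfl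
    all_goals nlinarith [hexp]
  calc Real.exp ((Real.exp ε - 1) / ε ^ 3 - (1 + ε) / ε ^ 2)
      ≤ Real.exp (-(1/(4*ε))) := Real.exp_le_exp.mpr harg
    _ ≤ 4 * ε := by
        rw [Real.exp_neg]
        have hy : (0:ℝ) < 1/(4*ε) := by positivity
        have h1 : 1/(4*ε) ≤ Real.exp (1/(4*ε)) := by
          linarith [Real.add_one_le_exp (1/(4*ε))]
        have h2' := inv_anti₀ hy h1
        calc (Real.exp (1/(4*ε)))⁻¹ ≤ (1/(4*ε))⁻¹ := h2'
          _ = 4*ε := by field_simp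

lemma lemPack {U : Type} [Fintype U] [DecidableEq U] {d : ℕ}
    (f : Finset U → ℝ) (hsub : ∀ S T : Finset U, f (S ∪ T) + f (S ∩ T) ≤ f S + f T)
    (hnn : ∀ S : Finset U, 0 ≤ f S)
    (c : U → Fin d → ℝ) (hc : ∀ i r, 0 ≤ c i r)
    (L : Fin d → ℝ) (hL : ∀ r, 0 < L r)
    (hsmall : ∀ i r, c i r ≤ L r / 2)
    (O : ℝ) (hO0 : 0 ≤ O)
    (hOub : ∀ T : Finset U, (∀ r, ∑ i ∈ T, c i r ≤ L r) → f T ≤ O) :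
    ∀ (n : ℕ) (R : Finset U), R.card ≤ n →
      f R ≤ (1 + 2 * ∑ r, (∑ i ∈ R, c i r) / L r) * O := by
  intro n
  induction n with
  | zero =>
    intro R hR
    have : R = ∅ := Finset.card_eq_zero.mp (Nat.le_zero.mp hR)
    subst this
    have hfeas : ∀ r, ∑ i ∈ (∅ : Finset U), c i r ≤ L r := by
      intro r; simp [le_of_lt (hL r)]
    have h1 : f ∅ ≤ O := hOub ∅ hfeas
    have hX : 0 ≤ ∑ r : Fin d, (∑ i ∈ (∅ : Finset U), c i r) / L r := by
      apply Finset.sum_nonneg; intro r _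
      exact div_nonneg (Finset.sum_nonneg fun i _ => hc i r) (hL r).le
    nlinarith
  | succ n ih =>
    intro R hR
    classical
    have hXnn : ∀ S : Finset U, 0 ≤ ∑ r : Fin d, (∑ i ∈ S, c i r) / L r := by
      intro S
      apply Finset.sum_nonneg; intro r _
      exact div_nonneg (Finset.sum_nonneg fun i _ => hc i r) (hL r).le
    by_cases hfeas : ∀ r, ∑ i ∈ R, c i r ≤ L r
    · have h1 : f R ≤ O := hOub R hfeas
      nlinarith [hXnn R]
    · -- pick a maximum-cardinality feasible subset S of R
      set 𝒮 : Finset (Finset U) :=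
        R.powerset.filter (fun S => ∀ r, ∑ i ∈ S, c i r ≤ L r) with h𝒮
      have hEmem : (∅ : Finset U) ∈ 𝒮 := by
        simp only [h𝒮, Finset.mem_filter, Finset.mem_powerset]
        exact ⟨Finset.empty_subset R, by intro r; simp [le_of_lt (hL r)]⟩
      obtain ⟨S, hS𝒮, hSmax⟩ := Finset.exists_max_image 𝒮 Finset.card ⟨∅, hEmem⟩
      have hSR : S ⊆ R := Finset.mem_powerset.mp (Finset.mem_filter.mp hS𝒮).1
      have hSfeas : ∀ r, ∑ i ∈ S, c i r ≤ L r := (Finset.mem_filter.mp hS𝒮).2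
      have hSne : S ≠ R := by
        intro h; exact hfeas (h ▸ hSfeas)
      obtain ⟨i0, hi0R, hi0S⟩ := Finset.exists_of_ssubset (Finset.ssubset_iff_subset_ne.mpr ⟨hSR, hSne⟩)
      have hins : insert i0 S ∉ 𝒮 := by
        intro hmem
        have := hSmax _ hmem
        rw [Finset.card_insert_of_notMem hi0S] at this
        omega
      have hinsub : insert i0 S ⊆ R := Finset.insert_subset hi0R hSR
      have : ¬ (∀ r, ∑ i ∈ insert i0 S, c i r ≤ L r) := by
        intro h
        exact hins (by simp only [h𝒮, Finset.mem_filter, Finset.mem_powerset]; exact ⟨hinsub, h⟩)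
      push_neg at this
      obtain ⟨r0, hr0⟩ := this
      rw [Finset.sum_insert hi0S] at hr0
      have hSr0 : L r0 / 2 < ∑ i ∈ S, c i r0 := by
        have := hsmall i0 r0
        linarith
      have hXS : 1/2 < ∑ r : Fin d, (∑ i ∈ S, c i r) / L r := by
        have hterm : 1/2 < (∑ i ∈ S, c i r0) / L r0 := by
          rw [lt_div_iff₀ (hL r0)]
          linarith [hL r0]
        calc (1:ℝ)/2 < (∑ i ∈ S, c i r0) / L r0 := hterm
          _ ≤ ∑ r : Fin d, (∑ i ∈ S, c i r) / L r := by
            apply Finset.single_le_sum (f := fun r => (∑ i ∈ S, c i r) / L r)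
            · intro r _
              exact div_nonneg (Finset.sum_nonneg fun i _ => hc i r) (hL r).le
            · exact Finset.mem_univ r0
      have hSnonempty : S.Nonempty := by
        rcases Finset.eq_empty_or_nonempty S with h | h
        · exfalso
          rw [h] at hSr0
          simp at hSr0
          linarith [hL r0]
        · exact h
      have hcard : (R \ S).card ≤ n := by
        rw [Finset.card_sdiff_of_subset hSR]
        have : 1 ≤ S.card := Finset.card_pos.mpr hSnonempty
        omega
      have hih := ih (R \ S) hcard
      have hfS : f S ≤ O := hOub S hSfeas
      have hRsplit : f R ≤ f S + f (R \ S) := by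
        have h1 := hsub S (R \ S)
        rw [Finset.union_sdiff_of_subset hSR, Finset.inter_sdiff_self] at h1
        linarith [hnn (∅ : Finset U)]
      have hXsplit : ∀ r, ∑ i ∈ R \ S, c i r = ∑ i ∈ R, c i r - ∑ i ∈ S, c i r := by
        intro r
        have := Finset.sum_sdiff (f := fun i => c i r) hSR
        linarith
      have hXeq : ∑ r : Fin d, (∑ i ∈ R \ S, c i r) / L r
          = ∑ r : Fin d, (∑ i ∈ R, c i r) / L r - ∑ r : Fin d, (∑ i ∈ S, c i r) / L r := by
        rw [← Finset.sum_sub_distrib]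
        apply Finset.sum_congr rfl
        intro r _
        rw [hXsplit r, sub_div]
      rw [hXeq] at hih
      nlinarith [hXnn R, hXnn S]

lemma lemStep3 {U : Type} [Fintype U] [DecidableEq U] {d : ℕ}
    (x g : U → ℝ) (hx0 : ∀ i, 0 ≤ x i) (hg1 : ∀ i, 1 ≤ g i) (hg3 : ∀ i, g i ≤ 3)
    (c : U → Fin d → ℝ) (hc : ∀ i r, 0 ≤ c i r)
    (L : Fin d → ℝ) (hL : ∀ r, 0 < L r)
    (hxc : ∀ r, ∑ i : U, x i * c i r ≤ L r) :
    ∑ R : Finset U, ((∏ i ∈ R, x i) * ∏ i ∈ Rᶜ, (1 - x i))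
        * ((1 + 2 * ∑ r : Fin d, ∑ i ∈ R, c i r / L r) * ∏ i ∈ R, g i)
      ≤ (1 + 6 * d) * ∏ i : U, (x i * g i + (1 - x i)) := by
  classical
  set P := ∏ i : U, (x i * g i + (1 - x i)) with hP
  have hfac1 : ∀ i, (1:ℝ) ≤ x i * g i + (1 - x i) := fun i => by nlinarith [hx0 i, hg1 i]
  have hP0 : 0 ≤ P := Finset.prod_nonneg fun i _ => le_trans zero_le_one (hfac1 i)
  have e1 : ∀ R : Finset U,
      ((∏ i ∈ R, x i) * ∏ i ∈ Rᶜ, (1 - x i))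
        * ((1 + 2 * ∑ r : Fin d, ∑ i ∈ R, c i r / L r) * ∏ i ∈ R, g i)
      = ((∏ i ∈ R, x i) * ∏ i ∈ Rᶜ, (1 - x i)) * ∏ i ∈ R, g i
        + 2 * ∑ r : Fin d, ∑ i ∈ R,
            (c i r / L r) * (((∏ j ∈ R, x j) * ∏ j ∈ Rᶜ, (1 - x j)) * ∏ j ∈ R, g j) := by
    intro R
    have h2 : ∑ r : Fin d, ∑ i ∈ R,
          (c i r / L r) * (((∏ j ∈ R, x j) * ∏ j ∈ Rᶜ, (1 - x j)) * ∏ j ∈ R, g j)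
        = (∑ r : Fin d, ∑ i ∈ R, c i r / L r)
            * (((∏ j ∈ R, x j) * ∏ j ∈ Rᶜ, (1 - x j)) * ∏ j ∈ R, g j) := by
      rw [Finset.sum_mul]
      exact Finset.sum_congr rfl fun r _ => (Finset.sum_mul ..).symm
    rw [h2]
    ring
  rw [Finset.sum_congr rfl (fun R _ => e1 R), Finset.sum_add_distrib, lemA]
  have hB : ∑ R : Finset U, 2 * ∑ r : Fin d, ∑ i ∈ R,
        (c i r / L r) * (((∏ j ∈ R, x j) * ∏ j ∈ Rᶜ, (1 - x j)) * ∏ j ∈ R, g j)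
      ≤ 2 * (d * (3 * P)) := by
    rw [← Finset.mul_sum]
    have hBmain : ∑ R : Finset U, ∑ r : Fin d, ∑ i ∈ R,
          (c i r / L r) * (((∏ j ∈ R, x j) * ∏ j ∈ Rᶜ, (1 - x j)) * ∏ j ∈ R, g j)
        ≤ d * (3 * P) := by
      rw [Finset.sum_comm]
      have hr : ∀ r : Fin d, ∑ R : Finset U, ∑ i ∈ R,
            (c i r / L r) * (((∏ j ∈ R, x j) * ∏ j ∈ Rᶜ, (1 - x j)) * ∏ j ∈ R, g j)
          ≤ 3 * P := by
        intro r
        have step : ∀ R : Finset U, ∑ i ∈ R,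
              (c i r / L r) * (((∏ j ∈ R, x j) * ∏ j ∈ Rᶜ, (1 - x j)) * ∏ j ∈ R, g j)
            = ∑ i : U, (if i ∈ R then
              (c i r / L r) * (((∏ j ∈ R, x j) * ∏ j ∈ Rᶜ, (1 - x j)) * ∏ j ∈ R, g j) else 0) := by
          intro R
          rw [Finset.sum_ite_mem, Finset.univ_inter]
        rw [Finset.sum_congr rfl (fun R _ => step R), Finset.sum_comm]
        have inner : ∀ i : U, ∑ R : Finset U, (if i ∈ R then
              (c i r / L r) * (((∏ j ∈ R, x j) * ∏ j ∈ Rᶜ, (1 - x j)) * ∏ j ∈ R, g j) else 0)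
            ≤ (c i r / L r) * (x i * g i * P) := by
          intro i
          have pull : ∀ R : Finset U, (if i ∈ R then
                (c i r / L r) * (((∏ j ∈ R, x j) * ∏ j ∈ Rᶜ, (1 - x j)) * ∏ j ∈ R, g j) else 0)
              = (c i r / L r) * (if i ∈ R then
                ((∏ j ∈ R, x j) * ∏ j ∈ Rᶜ, (1 - x j)) * ∏ j ∈ R, g j else 0) := by
            intro R; split <;> ring
          rw [Finset.sum_congr rfl (fun R _ => pull R), ← Finset.mul_sum]
          exact mul_le_mul_of_nonneg_left (lemB x g hx0 hg1 i)
            (div_nonneg (hc i r) (hL r).le)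
        calc ∑ i : U, ∑ R : Finset U, (if i ∈ R then
              (c i r / L r) * (((∏ j ∈ R, x j) * ∏ j ∈ Rᶜ, (1 - x j)) * ∏ j ∈ R, g j) else 0)
            ≤ ∑ i : U, (c i r / L r) * (x i * g i * P) :=
              Finset.sum_le_sum (fun i _ => inner i)
          _ = P / L r * ∑ i : U, x i * g i * c i r := by
              rw [Finset.mul_sum]
              exact Finset.sum_congr rfl (fun i _ => by ring)
          _ ≤ P / L r * (3 * L r) := by
              apply mul_le_mul_of_nonneg_left _ (div_nonneg hP0 (hL r).le)
              calc ∑ i : U, x i * g i * c i r ≤ ∑ i : U, 3 * (x i * c i r) := by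
                    apply Finset.sum_le_sum
                    intro i _
                    nlinarith [mul_le_mul_of_nonneg_left (hg3 i) (mul_nonneg (hx0 i) (hc i r))]
                _ = 3 * ∑ i : U, x i * c i r := by rw [Finset.mul_sum]
                _ ≤ 3 * L r := by linarith [hxc r]
          _ = 3 * P := by
              have hLne : L r ≠ 0 := (hL r).ne'
              field_simp
      calc ∑ r : Fin d, ∑ R : Finset U, ∑ i ∈ R,
            (c i r / L r) * (((∏ j ∈ R, x j) * ∏ j ∈ Rᶜ, (1 - x j)) * ∏ j ∈ R, g j)
          ≤ ∑ _r : Fin d, 3 * P := Finset.sum_le_sum (fun r _ => hr r)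
        _ = d * (3 * P) := by
            rw [Finset.sum_const, Finset.card_univ, Fintype.card_fin, nsmul_eq_mul]
    linarith
  linarith [hB]

lemma lemR {U : Type} [Fintype U] [DecidableEq U] {d : ℕ}
    (x : U → ℝ) (hx0 : ∀ i, 0 ≤ x i)
    (c : U → Fin d → ℝ) (hc : ∀ i r, 0 ≤ c i r)
    (L : Fin d → ℝ) (hL : ∀ r, 0 < L r)
    (ε : ℝ) (hε0 : 0 < ε) (hε2 : ε ≤ 1/2)
    (hsmall : ∀ i r, c i r ≤ ε ^ 3 * L r)
    (hxc : ∀ r, ∑ i : U, x i * c i r ≤ L r) (r' : Fin d) :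
    ∑ R : Finset U, ((∏ i ∈ R, x i) * ∏ i ∈ Rᶜ, (1 - x i))
        * ((1 + 2 * ∑ r : Fin d, ∑ i ∈ R, c i r / L r)
            * Real.exp ((1/(ε^2 * L r')) * ((∑ i ∈ R, c i r') - (1+ε) * L r')))
      ≤ (1 + 6 * d) * (4 * ε) := by
  classical
  set t : ℝ := 1/(ε^2 * L r') with ht
  have htpos : 0 < t := by rw [ht]; exact div_pos one_pos (mul_pos (pow_pos hε0 2) (hL r'))
  set g : U → ℝ := fun i => Real.exp (t * c i r') with hg
  have hLne : L r' ≠ 0 := (hL r').ne'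
  have hεne : ε ≠ 0 := hε0.ne'
  have hg1 : ∀ i, 1 ≤ g i := fun i =>
    Real.one_le_exp (mul_nonneg htpos.le (hc i r'))
  have harg : ∀ i, t * c i r' ≤ ε := by
    intro i
    have h1 : t * c i r' ≤ t * (ε^3 * L r') :=
      mul_le_mul_of_nonneg_left (hsmall i r') htpos.le
    have h2 : t * (ε^3 * L r') = ε := by rw [ht]; field_simp
    linarith
  have hg3 : ∀ i, g i ≤ 3 := by
    intro i
    have : g i ≤ Real.exp 1 := Real.exp_le_exp.mpr (le_trans (harg i) (by linarith))
    have he := Real.exp_one_lt_d9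
    linarith
  have htM : t * (ε^3 * L r') = ε := by rw [ht]; field_simp
  have hM : (0:ℝ) < ε^3 * L r' := mul_pos (pow_pos hε0 3) (hL r')
  -- bound on the product
  have hPi : ∏ i : U, (x i * g i + (1 - x i)) ≤ Real.exp ((Real.exp ε - 1) / ε^3) := by
    have hfac : ∀ i : U, x i * g i + (1 - x i) ≤ Real.exp (x i * (g i - 1)) := by
      intro i
      have h1 : x i * (g i - 1) + 1 ≤ Real.exp (x i * (g i - 1)) :=
        Real.add_one_le_exp _
      nlinarith
    have hfac0 : ∀ i : U, (0:ℝ) ≤ x i * g i + (1 - x i) := by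
      intro i; nlinarith [hx0 i, hg1 i]
    calc ∏ i : U, (x i * g i + (1 - x i))
        ≤ ∏ i : U, Real.exp (x i * (g i - 1)) :=
          Finset.prod_le_prod (fun i _ => hfac0 i) (fun i _ => hfac i)
      _ = Real.exp (∑ i : U, x i * (g i - 1)) := (Real.exp_sum _ _).symm
      _ ≤ Real.exp ((Real.exp ε - 1) / ε^3) := by
          apply Real.exp_le_exp.mpr
          have hsum : ∑ i : U, x i * (g i - 1)
              ≤ ∑ i : U, (Real.exp ε - 1) / (ε^3 * L r') * (x i * c i r') := by
            apply Finset.sum_le_sum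
            intro i _
            have hgi : g i - 1 ≤ (c i r' / (ε^3 * L r')) * (Real.exp ε - 1) := by
              have := lemConv (t := t) (M := ε^3 * L r') (a := c i r')
                htpos.le hM (hc i r') (by nlinarith [hsmall i r'])
              rw [htM] at this
              simp only [hg]
              linarith
            have := mul_le_mul_of_nonneg_left hgi (hx0 i)
            calc x i * (g i - 1) ≤ x i * ((c i r' / (ε^3 * L r')) * (Real.exp ε - 1)) := this
              _ = (Real.exp ε - 1) / (ε^3 * L r') * (x i * c i r') := by ring
          have hsum2 : ∑ i : U, (Real.exp ε - 1) / (ε^3 * L r') * (x i * c i r')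
              = (Real.exp ε - 1) / (ε^3 * L r') * ∑ i : U, x i * c i r' := by
            rw [Finset.mul_sum]
          have hexpε : (0:ℝ) ≤ Real.exp ε - 1 := by
            have := Real.one_le_exp hε0.le; linarith
          have hsum3 : (Real.exp ε - 1) / (ε^3 * L r') * ∑ i : U, x i * c i r'
              ≤ (Real.exp ε - 1) / (ε^3 * L r') * L r' :=
            mul_le_mul_of_nonneg_left (hxc r') (div_nonneg hexpε hM.le)
          have hsum4 : (Real.exp ε - 1) / (ε^3 * L r') * L r' = (Real.exp ε - 1) / ε^3 := by
            field_simp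
          linarith
  -- rewrite the exponential
  have hrw : ∀ R : Finset U,
      Real.exp (t * ((∑ i ∈ R, c i r') - (1+ε) * L r'))
      = (∏ i ∈ R, g i) * Real.exp (-((1+ε)/ε^2)) := by
    intro R
    have h1 : t * ((∑ i ∈ R, c i r') - (1+ε) * L r')
        = (∑ i ∈ R, t * c i r') + (-((1+ε)/ε^2)) := by
      rw [← Finset.mul_sum]
      rw [ht]
      field_simp
      ring
    rw [h1, Real.exp_add]
    congr 1
    exact Real.exp_sum R (fun i => t * c i r')
  have step := lemStep3 x g hx0 hg1 hg3 c hc L hL hxc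
  have hE0 : (0:ℝ) ≤ Real.exp (-((1+ε)/ε^2)) := (Real.exp_pos _).le
  calc ∑ R : Finset U, ((∏ i ∈ R, x i) * ∏ i ∈ Rᶜ, (1 - x i))
        * ((1 + 2 * ∑ r : Fin d, ∑ i ∈ R, c i r / L r)
            * Real.exp ((1/(ε^2 * L r')) * ((∑ i ∈ R, c i r') - (1+ε) * L r')))
      = (∑ R : Finset U, ((∏ i ∈ R, x i) * ∏ i ∈ Rᶜ, (1 - x i))
        * ((1 + 2 * ∑ r : Fin d, ∑ i ∈ R, c i r / L r) * ∏ i ∈ R, g i))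
          * Real.exp (-((1+ε)/ε^2)) := by
        rw [Finset.sum_mul]
        apply Finset.sum_congr rfl
        intro R _
        rw [← ht, hrw R]
        ring
    _ ≤ ((1 + 6 * d) * ∏ i : U, (x i * g i + (1 - x i))) * Real.exp (-((1+ε)/ε^2)) :=
        mul_le_mul_of_nonneg_right step hE0
    _ ≤ ((1 + 6 * d) * Real.exp ((Real.exp ε - 1) / ε^3)) * Real.exp (-((1+ε)/ε^2)) := by
        apply mul_le_mul_of_nonneg_right _ hE0
        apply mul_le_mul_of_nonneg_left hPi
        positivity
    _ = (1 + 6 * d) * Real.exp ((Real.exp ε - 1) / ε^3 - (1+ε)/ε^2) := by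
        rw [mul_assoc, ← Real.exp_add]
        ring_nf
    _ ≤ (1 + 6 * d) * (4 * ε) := by
        apply mul_le_mul_of_nonneg_left (lemNum hε0 hε2)
        positivity

theorem exists_nearly_feasible_realization
    (d : ℕ) (hd : 1 ≤ d) :
    ∃ C : ℝ, 0 < C ∧
      ∀ (U : Type) [Fintype U] [DecidableEq U],
      ∀ (f : Finset U → ℝ),
        (∀ S T : Finset U, f (S ∪ T) + f (S ∩ T) ≤ f S + f T) →
        (∀ S : Finset U, 0 ≤ f S) →
        f ∅ = 0 →
      ∀ (c : U → Fin d → ℝ), (∀ i r, 0 ≤ c i r) →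
      ∀ (L : Fin d → ℝ), (∀ r, 0 < L r) →
      ∀ (ε : ℝ), 0 < ε → ε < 1 →
        (∀ (i : U) (r : Fin d), c i r ≤ ε ^ 3 * L r) →
      ∀ (O : ℝ),
        IsGreatest
          {y : ℝ | ∃ T : Finset U, (∀ r, ∑ i ∈ T, c i r ≤ L r) ∧ f T = y} O →
      ∀ (x : U → ℝ), (∀ i, 0 ≤ x i ∧ x i ≤ 1) →
        (∀ r, ∑ i : U, x i * c i r ≤ L r) →
        O / 5 ≤ mulExt f x →
        ∃ D : Finset U,
          (∀ i : U, x i = 1 → i ∈ D) ∧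
          (∀ i ∈ D, 0 < x i) ∧
          (∀ r, ∑ i ∈ D, c i r ≤ (1 + ε) * L r) ∧
          (1 - C * ε) * mulExt f x ≤ f D := by
  classical
  have hd1 : (1:ℝ) ≤ (d:ℝ) := by exact_mod_cast hd
  refine ⟨140 * (d:ℝ)^2, by positivity, ?_⟩
  intro U instF instD f hsub hnn hemp c hc L hL ε hε0 hε1 hsmall O hO x hx hxc hF5
  classical
  set C : ℝ := 140 * (d:ℝ)^2 with hCdef
  have hx0 : ∀ i, 0 ≤ x i := fun i => (hx i).1
  have hx1 : ∀ i, x i ≤ 1 := fun i => (hx i).2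
  set w : Finset U → ℝ := fun R => (∏ i ∈ R, x i) * ∏ i ∈ Rᶜ, (1 - x i) with hwdef
  have hw0 : ∀ R, 0 ≤ w R := fun R =>
    mul_nonneg (Finset.prod_nonneg fun i _ => hx0 i)
      (Finset.prod_nonneg fun i _ => by linarith [hx1 i])
  have hFw : mulExt f x = ∑ R : Finset U, w R * f R := by
    unfold mulExt
    exact Finset.sum_congr rfl fun R _ => by rw [hwdef]; ring
  have hFnn : 0 ≤ mulExt f x := by
    rw [hFw]
    exact Finset.sum_nonneg fun R _ => mul_nonneg (hw0 R) (hnn R)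
  by_cases hdeg : (1 - C * ε) * mulExt f x ≤ 0
  · refine ⟨Finset.univ.filter (fun i => x i = 1), ?_, ?_, ?_, ?_⟩
    · intro i hi; simp [hi]
    · intro i hi
      have : x i = 1 := (Finset.mem_filter.mp hi).2
      rw [this]; norm_num
    · intro r
      have h1 : ∑ i ∈ Finset.univ.filter (fun i => x i = 1), c i r
          = ∑ i ∈ Finset.univ.filter (fun i => x i = 1), x i * c i r := by
        apply Finset.sum_congr rfl
        intro i hi
        rw [(Finset.mem_filter.mp hi).2, one_mul]
      have h2 : ∑ i ∈ Finset.univ.filter (fun i => x i = 1), x i * c i r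
          ≤ ∑ i : U, x i * c i r := by
        apply Finset.sum_le_sum_of_subset_of_nonneg (Finset.filter_subset _ _)
        intro i _ _
        exact mul_nonneg (hx0 i) (hc i r)
      have := hxc r
      have hLr := hL r
      rw [h1]
      nlinarith
    · calc (1 - C * ε) * mulExt f x ≤ 0 := hdeg
        _ ≤ f _ := hnn _
  · push_neg at hdeg
    have hF0 : 0 < mulExt f x := by
      rcases eq_or_lt_of_le hFnn with h | h
      · exfalso; rw [← h] at hdeg; simp at hdeg
      · exact h
    have h1C : 0 < 1 - C * ε := by
      by_contra h
      push_neg at h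
      nlinarith
    have hC140 : (140:ℝ) ≤ C := by
      rw [hCdef]; nlinarith
    have hε2 : ε ≤ 1/2 := by nlinarith
    have hO0 : 0 ≤ O := by
      have h0mem : (0:ℝ) ∈ {y : ℝ | ∃ T : Finset U, (∀ r, ∑ i ∈ T, c i r ≤ L r) ∧ f T = y} :=
        ⟨∅, fun r => by simp [(hL r).le], hemp⟩
      exact hO.2 h0mem
    have hO5 : O ≤ 5 * mulExt f x := by linarith
    have hOub : ∀ T : Finset U, (∀ r, ∑ i ∈ T, c i r ≤ L r) → f T ≤ O :=
      fun T h => hO.2 ⟨T, h, rfl⟩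
    have hsmall2 : ∀ i r, c i r ≤ L r / 2 := by
      intro i r
      have := hsmall i r
      have hLr := hL r
      nlinarith [pow_le_pow_left₀ hε0.le hε2 3, pow_pos hε0 3]
    have hpack := lemPack f hsub hnn c hc L hL hsmall2 O hO0 hOub
    have hpack' : ∀ R : Finset U,
        f R ≤ (1 + 2 * ∑ r : Fin d, ∑ i ∈ R, c i r / L r) * O := by
      intro R
      have h := hpack R.card R (le_refl _)
      have he : ∀ r : Fin d, (∑ i ∈ R, c i r) / L r = ∑ i ∈ R, c i r / L r :=
        fun r => Finset.sum_div _ _ _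
      rw [Finset.sum_congr rfl (fun r _ => he r)] at h
      exact h
    have hXnn : ∀ R : Finset U, 0 ≤ ∑ r : Fin d, ∑ i ∈ R, c i r / L r := by
      intro R
      apply Finset.sum_nonneg
      intro r _
      exact Finset.sum_nonneg fun i _ => div_nonneg (hc i r) (hL r).le
    -- the key bound on the "bad" part
    have key : ∑ R : Finset U, w R * (if (∀ r, ∑ i ∈ R, c i r ≤ (1+ε) * L r) then 0 else f R)
        ≤ C * ε * mulExt f x := by
      have hpt : ∀ R : Finset U,
          w R * (if (∀ r, ∑ i ∈ R, c i r ≤ (1+ε) * L r) then 0 else f R)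
          ≤ ∑ r' : Fin d, (w R * ((1 + 2 * ∑ r : Fin d, ∑ i ∈ R, c i r / L r)
              * Real.exp ((1/(ε^2 * L r')) * ((∑ i ∈ R, c i r') - (1+ε) * L r')))) * O := by
        intro R
        have htermnn : ∀ r' : Fin d, 0 ≤ (w R * ((1 + 2 * ∑ r : Fin d, ∑ i ∈ R, c i r / L r)
            * Real.exp ((1/(ε^2 * L r')) * ((∑ i ∈ R, c i r') - (1+ε) * L r')))) * O := by
          intro r'
          apply mul_nonneg _ hO0
          apply mul_nonneg (hw0 R)
          apply mul_nonneg _ (Real.exp_pos _).le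
          linarith [hXnn R]
        by_cases hgood : ∀ r, ∑ i ∈ R, c i r ≤ (1+ε) * L r
        · rw [if_pos hgood, mul_zero]
          exact Finset.sum_nonneg fun r' _ => htermnn r'
        · rw [if_neg hgood]
          push_neg at hgood
          obtain ⟨r0, hr0⟩ := hgood
          have hexp1 : 1 ≤ Real.exp ((1/(ε^2 * L r0)) * ((∑ i ∈ R, c i r0) - (1+ε) * L r0)) := by
            apply Real.one_le_exp
            apply mul_nonneg
            · exact le_of_lt (one_div_pos.mpr (mul_pos (pow_pos hε0 2) (hL r0)))
            · linarith
          have hstep : w R * f R ≤ (w R * ((1 + 2 * ∑ r : Fin d, ∑ i ∈ R, c i r / L r)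
              * Real.exp ((1/(ε^2 * L r0)) * ((∑ i ∈ R, c i r0) - (1+ε) * L r0)))) * O := by
            have h1 : f R ≤ (1 + 2 * ∑ r : Fin d, ∑ i ∈ R, c i r / L r) * O := hpack' R
            have h2 : (1 + 2 * ∑ r : Fin d, ∑ i ∈ R, c i r / L r) * O
                ≤ ((1 + 2 * ∑ r : Fin d, ∑ i ∈ R, c i r / L r)
                  * Real.exp ((1/(ε^2 * L r0)) * ((∑ i ∈ R, c i r0) - (1+ε) * L r0))) * O := by
              apply mul_le_mul_of_nonneg_right _ hO0
              nlinarith [hXnn R, hexp1]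
            calc w R * f R ≤ w R * (((1 + 2 * ∑ r : Fin d, ∑ i ∈ R, c i r / L r)
                  * Real.exp ((1/(ε^2 * L r0)) * ((∑ i ∈ R, c i r0) - (1+ε) * L r0))) * O) :=
                mul_le_mul_of_nonneg_left (le_trans h1 h2) (hw0 R)
              _ = _ := by ring
          calc w R * f R ≤ _ := hstep
            _ ≤ ∑ r' : Fin d, (w R * ((1 + 2 * ∑ r : Fin d, ∑ i ∈ R, c i r / L r)
                * Real.exp ((1/(ε^2 * L r')) * ((∑ i ∈ R, c i r') - (1+ε) * L r')))) * O :=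
              Finset.single_le_sum (fun r' _ => htermnn r') (Finset.mem_univ r0)
      calc ∑ R : Finset U, w R * (if (∀ r, ∑ i ∈ R, c i r ≤ (1+ε) * L r) then 0 else f R)
          ≤ ∑ R : Finset U, ∑ r' : Fin d,
            (w R * ((1 + 2 * ∑ r : Fin d, ∑ i ∈ R, c i r / L r)
              * Real.exp ((1/(ε^2 * L r')) * ((∑ i ∈ R, c i r') - (1+ε) * L r')))) * O :=
            Finset.sum_le_sum fun R _ => hpt R
        _ = ∑ r' : Fin d, (∑ R : Finset U,
            w R * ((1 + 2 * ∑ r : Fin d, ∑ i ∈ R, c i r / L r)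
              * Real.exp ((1/(ε^2 * L r')) * ((∑ i ∈ R, c i r') - (1+ε) * L r')))) * O := by
            rw [Finset.sum_comm]
            exact Finset.sum_congr rfl fun r' _ => (Finset.sum_mul _ _ _).symm
        _ ≤ ∑ _r' : Fin d, ((1 + 6 * d) * (4 * ε)) * O := by
            apply Finset.sum_le_sum
            intro r' _
            apply mul_le_mul_of_nonneg_right _ hO0
            exact lemR x hx0 c hc L hL ε hε0 hε2 hsmall hxc r'
        _ = d * (((1 + 6 * d) * (4 * ε)) * O) := by
            rw [Finset.sum_const, Finset.card_univ, Fintype.card_fin, nsmul_eq_mul]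
        _ ≤ C * ε * mulExt f x := by
            rw [hCdef]
            have h5 : (d:ℝ) * (((1 + 6 * d) * (4 * ε)) * O)
                ≤ (d:ℝ) * (((1 + 6 * d) * (4 * ε)) * (5 * mulExt f x)) := by
              apply mul_le_mul_of_nonneg_left _ (by positivity)
              apply mul_le_mul_of_nonneg_left hO5
              positivity
            have h6 : (d:ℝ) * (((1 + 6 * d) * (4 * ε)) * (5 * mulExt f x))
                ≤ 140 * (d:ℝ)^2 * ε * mulExt f x := by
              have hdd : (d:ℝ) ≤ (d:ℝ)^2 := by nlinarith
              have hεF : (0:ℝ) ≤ ε * mulExt f x := (mul_pos hε0 hF0).le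
              nlinarith [mul_le_mul_of_nonneg_right hdd hεF]
            linarith
    -- sum of weights is one
    have hwsum : ∑ R : Finset U, w R = 1 := by
      have h := lemA x (fun _ => (1:ℝ))
      simp only [Finset.prod_const_one, mul_one] at h
      rw [hwdef]
      rw [h]
      rw [Finset.prod_congr rfl (fun i (_ : i ∈ Finset.univ) =>
        show x i + (1 - x i) = 1 by ring)]
      exact Finset.prod_const_one
    -- split F into good and bad parts
    have hsplit : ∑ R : Finset U, w R * f R
        = ∑ R : Finset U, w R * (if (∀ r, ∑ i ∈ R, c i r ≤ (1+ε) * L r) then f R else 0)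
          + ∑ R : Finset U, w R * (if (∀ r, ∑ i ∈ R, c i r ≤ (1+ε) * L r) then 0 else f R) := by
      rw [← Finset.sum_add_distrib]
      apply Finset.sum_congr rfl
      intro R _
      by_cases h : ∀ r, ∑ i ∈ R, c i r ≤ (1+ε) * L r
      · rw [if_pos h, if_pos h]; ring
      · rw [if_neg h, if_neg h]; ring
    have hgoodsum : (1 - C * ε) * mulExt f x
        ≤ ∑ R : Finset U, w R * (if (∀ r, ∑ i ∈ R, c i r ≤ (1+ε) * L r) then f R else 0) := by
      rw [hFw] at hdeg hF0 ⊢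
      nlinarith [key, hsplit, hFw]
    -- extract a witness
    have hex : ∃ R : Finset U, 0 < w R ∧
        (1 - C * ε) * mulExt f x ≤ (if (∀ r, ∑ i ∈ R, c i r ≤ (1+ε) * L r) then f R else 0) := by
      by_contra hno
      push_neg at hno
      have hlt : ∑ R : Finset U, w R * (if (∀ r, ∑ i ∈ R, c i r ≤ (1+ε) * L r) then f R else 0)
          < ∑ R : Finset U, w R * ((1 - C * ε) * mulExt f x) := by
        apply Finset.sum_lt_sum
        · intro R _
          rcases eq_or_lt_of_le (hw0 R) with h | h
          · rw [← h]; simp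
          · exact le_of_lt (mul_lt_mul_of_pos_left (hno R h) h)
        · obtain ⟨R0, _, hR0⟩ := Finset.exists_ne_zero_of_sum_ne_zero
            (s := (Finset.univ : Finset (Finset U))) (f := w) (by rw [hwsum]; norm_num)
          have hR0pos : 0 < w R0 := lt_of_le_of_ne (hw0 R0) (Ne.symm hR0)
          exact ⟨R0, Finset.mem_univ R0, mul_lt_mul_of_pos_left (hno R0 hR0pos) hR0pos⟩
      rw [← Finset.sum_mul, hwsum, one_mul] at hlt
      linarith [hgoodsum]
    obtain ⟨R, hwR, hgR⟩ := hex
    have hGood : ∀ r, ∑ i ∈ R, c i r ≤ (1+ε) * L r := by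
      by_contra hng
      rw [if_neg hng] at hgR
      linarith
    rw [if_pos hGood] at hgR
    refine ⟨R, ?_, ?_, ?_, hgR⟩
    · intro i hi
      by_contra hiR
      have hic : i ∈ Rᶜ := Finset.mem_compl.mpr hiR
      have : ∏ j ∈ Rᶜ, (1 - x j) = 0 :=
        Finset.prod_eq_zero hic (by rw [hi]; ring)
      rw [hwdef] at hwR
      simp only [this, mul_zero] at hwR
      exact lt_irrefl 0 hwR
    · intro i hi
      rcases eq_or_lt_of_le (hx0 i) with h | h
      · exfalso
        have : ∏ j ∈ R, x j = 0 := Finset.prod_eq_zero hi h.symm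
        rw [hwdef] at hwR
        simp only [this, zero_mul] at hwR
        exact lt_irrefl 0 hwR
      · exact h
    · exact hGood
end

section
/- Let d ≥ 1 and k ≥ 1 be natural numbers, let 0 < ε < 1, let U be a finite type, let f : Finset U → ℝ be a submodular set function, let c : U → ℝ^d with c_r(i) ≥ 0, and let L ∈ ℝ^d with L_r > 0. Let x ∈ [0,1]^U be a vector with at most k fractional entries (i.e., |{ i : 0 < x_i < 1 }| ≤ k), such that every i with 0 < x_i < 1 satisfies c_r(i) ≤ ε³·L_r for all r, and such that Σ_{i∈U} x_i · c_r(i) ≤ L_r for all r. Then there exists a vector x' ∈ [0,1]^U with at most (8·ln(2k)/ε)^d fractional entries such that Σ_{i∈U} x'_i · c_r(i) ≤ (1+ε)·L_r for all r and F(x') ≥ F(x), where F is the extension by expectation of f. -/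
set_option maxHeartbeats 1000000


open scoped Classical

lemma quad_endpoint (p q r s u : ℝ) (hp : 0 ≤ p) (hs : s ≤ 0) (hu : 0 ≤ u) :
    r ≤ max (p * s ^ 2 + q * s + r) (p * u ^ 2 + q * u + r) := by
  by_contra h
  push_neg at h
  have h1 : p * s ^ 2 + q * s < 0 := by
    have := lt_of_le_of_lt (le_max_left (p * s ^ 2 + q * s + r) (p * u ^ 2 + q * u + r)) h
    linarith
  have h2 : p * u ^ 2 + q * u < 0 := by
    have := lt_of_le_of_lt (le_max_right (p * s ^ 2 + q * s + r) (p * u ^ 2 + q * u + r)) h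
    linarith
  rcases eq_or_lt_of_le hu with hu0 | hu0
  · subst hu0; nlinarith
  rcases eq_or_lt_of_le hs with hs0 | hs0
  · subst hs0; nlinarith
  have H1 : u * (p * s ^ 2 + q * s) < 0 := mul_neg_of_pos_of_neg hu0 h1
  have H2 : (-s) * (p * u ^ 2 + q * u) < 0 := mul_neg_of_pos_of_neg (by linarith) h2
  have H3 : 0 ≤ p * (-(s * u)) * (u - s) := by
    apply mul_nonneg (mul_nonneg hp (by nlinarith)) (by linarith)
  nlinarith

lemma sum_update_mul {U : Type*} [Fintype U] [DecidableEq U] (z g : U → ℝ) (w : U) (v : ℝ) :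
    ∑ l, Function.update z w v l * g l = (∑ l, z l * g l) + (v - z w) * g w := by
  rw [Finset.sum_eq_sum_sdiff_singleton_add (Finset.mem_univ w)
      (fun l => Function.update z w v l * g l),
    Finset.sum_eq_sum_sdiff_singleton_add (Finset.mem_univ w) (fun l => z l * g l)]
  have h : ∀ l ∈ Finset.univ \ {w}, Function.update z w v l * g l = z l * g l := by
    intro l hl
    have : l ≠ w := by simpa using (Finset.mem_sdiff.1 hl).2
    rw [Function.update_of_ne this]
  rw [Finset.sum_congr rfl h, Function.update_self]
  ring

lemma mulExt_bilinear {U : Type*} [Fintype U] [DecidableEq U]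
    (f : Finset U → ℝ)
    (hsub : ∀ S T : Finset U, f (S ∪ T) + f (S ∩ T) ≤ f S + f T)
    (y : U → ℝ) (hy : ∀ l, 0 ≤ y l ∧ y l ≤ 1)
    (i j : U) (hij : i ≠ j) :
    ∃ α β γ δ : ℝ, α ≤ 0 ∧ ∀ a b : ℝ,
      mulExt f (Function.update (Function.update y i a) j b)
        = α * (a * b) + β * a + γ * b + δ := by
  set S : Finset U := Finset.univ \ {i, j} with hS
  have hiS : i ∉ S := by simp [hS]
  have hjS : j ∉ S := by simp [hS]
  have hjiS : i ∉ insert j S := by simp [hS, hij]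
  have huniv : (Finset.univ : Finset U) = insert i (insert j S) := by
    ext l
    by_cases h1 : l = i <;> by_cases h2 : l = j <;> simp [hS, h1, h2]
  set w : Finset U → ℝ := fun R => (∏ l ∈ R, y l) * ∏ l ∈ S \ R, (1 - y l) with hw
  have hwnn : ∀ R, 0 ≤ w R := fun R =>
    mul_nonneg (Finset.prod_nonneg fun l _ => (hy l).1)
      (Finset.prod_nonneg fun l _ => by linarith [(hy l).2])
  refine ⟨∑ R ∈ S.powerset,
      w R * (f (insert i (insert j R)) - f (insert i R) - f (insert j R) + f R),
    ∑ R ∈ S.powerset, w R * (f (insert i R) - f R),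
    ∑ R ∈ S.powerset, w R * (f (insert j R) - f R),
    ∑ R ∈ S.powerset, w R * f R, ?_, ?_⟩
  · apply Finset.sum_nonpos
    intro R hR
    have hRS := Finset.mem_powerset.1 hR
    have hiR : i ∉ R := fun h => hiS (hRS h)
    have hjR : j ∉ R := fun h => hjS (hRS h)
    have hun : insert i R ∪ insert j R = insert i (insert j R) := by
      ext l; simp [Finset.mem_insert, Finset.mem_union]; tauto
    have hin : insert i R ∩ insert j R = R := by
      ext l
      simp only [Finset.mem_inter, Finset.mem_insert]
      constructor
      · rintro ⟨h1 | h1, h2 | h2⟩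
        · exact absurd (h1.symm.trans h2) hij
        · exact h2
        · exact h1
        · exact h1
      · intro h; exact ⟨Or.inr h, Or.inr h⟩
    have hkey := hsub (insert i R) (insert j R)
    rw [hun, hin] at hkey
    have := hwnn R
    nlinarith
  · intro a b
    set y' : U → ℝ := Function.update (Function.update y i a) j b with hy'
    have hy'S : ∀ l ∈ S, y' l = y l := by
      intro l hl
      have h1 : l ≠ i := fun h => hiS (h ▸ hl)
      have h2 : l ≠ j := fun h => hjS (h ▸ hl)
      rw [hy', Function.update_of_ne h2, Function.update_of_ne h1]
    have hy'i : y' i = a := by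
      rw [hy', Function.update_of_ne hij, Function.update_self]
    have hy'j : y' j = b := by rw [hy', Function.update_self]
    unfold mulExt
    rw [← Finset.powerset_univ, huniv, Finset.sum_powerset_insert hjiS,
      Finset.sum_powerset_insert hjS, Finset.sum_powerset_insert hjS,
      Finset.sum_mul, Finset.sum_mul, Finset.sum_mul,
      ← Finset.sum_add_distrib, ← Finset.sum_add_distrib, ← Finset.sum_add_distrib,
      ← Finset.sum_add_distrib, ← Finset.sum_add_distrib, ← Finset.sum_add_distrib]
    apply Finset.sum_congr rfl
    intro R hR
    have hRS := Finset.mem_powerset.1 hR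
    have hiR : i ∉ R := fun h => hiS (hRS h)
    have hjR : j ∉ R := fun h => hjS (hRS h)
    have hijR : i ∉ insert j R := by simp [hij, hiR]
    have hiSR : i ∉ S \ R := fun h => hiS (Finset.mem_sdiff.1 h).1
    have hjSR : j ∉ S \ R := fun h => hjS (Finset.mem_sdiff.1 h).1
    have hijSR : i ∉ insert j (S \ R) := by simp [hij, hiSR]
    have hc0 : Rᶜ = insert i (insert j (S \ R)) := by
      ext l
      by_cases h1 : l = i
      · subst h1; simp [hiR]
      · by_cases h2 : l = j
        · subst h2; simp [hjR, Ne.symm hij]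
        · simp [Finset.mem_compl, hS, h1, h2]
    have hc1 : (insert i R)ᶜ = insert j (S \ R) := by
      ext l
      by_cases h1 : l = i
      · subst h1; simp [hiR, hij, hiS]
      · by_cases h2 : l = j
        · subst h2; simp [hjR, Ne.symm hij]
        · simp [Finset.mem_compl, hS, h1, h2]
    have hc2 : (insert j R)ᶜ = insert i (S \ R) := by
      ext l
      by_cases h1 : l = i
      · subst h1; simp [hiR, hij]
      · by_cases h2 : l = j
        · subst h2; simp [hjR, Ne.symm hij, hjS]
        · simp [Finset.mem_compl, hS, h1, h2]
    have hc3 : (insert i (insert j R))ᶜ = S \ R := by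
      ext l
      by_cases h1 : l = i
      · subst h1; simp [hiS]
      · by_cases h2 : l = j
        · subst h2; simp [hjS]
        · simp [Finset.mem_compl, hS, h1, h2]
    have hPy : ∏ l ∈ R, y' l = ∏ l ∈ R, y l :=
      Finset.prod_congr rfl fun l hl => hy'S l (hRS hl)
    have hQy : ∏ l ∈ S \ R, (1 - y' l) = ∏ l ∈ S \ R, (1 - y l) :=
      Finset.prod_congr rfl fun l hl => by rw [hy'S l (Finset.mem_sdiff.1 hl).1]
    have hG0 : ∏ l ∈ Rᶜ, (1 - y' l)
        = (1 - a) * ((1 - b) * ∏ l ∈ S \ R, (1 - y l)) := by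
      rw [hc0, Finset.prod_insert hijSR, Finset.prod_insert hjSR, hy'i, hy'j, hQy]
    have hG1 : ∏ l ∈ (insert i R)ᶜ, (1 - y' l)
        = (1 - b) * ∏ l ∈ S \ R, (1 - y l) := by
      rw [hc1, Finset.prod_insert hjSR, hy'j, hQy]
    have hG2 : ∏ l ∈ (insert j R)ᶜ, (1 - y' l)
        = (1 - a) * ∏ l ∈ S \ R, (1 - y l) := by
      rw [hc2, Finset.prod_insert hiSR, hy'i, hQy]
    have hG3 : ∏ l ∈ (insert i (insert j R))ᶜ, (1 - y' l)
        = ∏ l ∈ S \ R, (1 - y l) := by rw [hc3, hQy]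
    have hP1 : ∏ l ∈ insert i R, y' l = a * ∏ l ∈ R, y l := by
      rw [Finset.prod_insert hiR, hy'i, hPy]
    have hP2 : ∏ l ∈ insert j R, y' l = b * ∏ l ∈ R, y l := by
      rw [Finset.prod_insert hjR, hy'j, hPy]
    have hP3 : ∏ l ∈ insert i (insert j R), y' l = a * (b * ∏ l ∈ R, y l) := by
      rw [Finset.prod_insert hijR, hP2, hy'i]
    rw [hPy, hG0, hP1, hG1, hP2, hG2, hP3, hG3, hw]
    ring

lemma swap_step {U : Type*} [Fintype U] [DecidableEq U]
    (f : Finset U → ℝ)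
    (hsub : ∀ S T : Finset U, f (S ∪ T) + f (S ∩ T) ≤ f S + f T)
    (y : U → ℝ) (hy : ∀ l, 0 ≤ y l ∧ y l ≤ 1)
    (i j : U) (hij : i ≠ j)
    (hi : 0 < y i ∧ y i < 1) (hj : 0 < y j ∧ y j < 1) :
    ∃ a b : ℝ, 0 ≤ a ∧ a ≤ 1 ∧ 0 ≤ b ∧ b ≤ 1 ∧ a + b = y i + y j ∧
      (a = 0 ∨ a = 1 ∨ b = 0 ∨ b = 1) ∧
      mulExt f y ≤ mulExt f (Function.update (Function.update y i a) j b) := by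
  obtain ⟨α, β, γ, δ, hα, hF⟩ := mulExt_bilinear f hsub y hy i j hij
  have hbase : mulExt f y = α * (y i * y j) + β * y i + γ * y j + δ := by
    have h := hF (y i) (y j)
    rwa [Function.update_eq_self, Function.update_eq_self] at h
  set u : ℝ := min (1 - y i) (y j) with hu
  set s : ℝ := -min (y i) (1 - y j) with hs
  have hu0 : 0 ≤ u := le_min (by linarith [hi.2]) hj.1.le
  have hs0 : s ≤ 0 := by
    rw [hs, neg_nonpos]
    exact le_min hi.1.le (by linarith [hj.2])
  have hquad := quad_endpoint (-α) (α * (y j - y i) + β - γ) (mulExt f y) s u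
    (by linarith) hs0 hu0
  have hφ : ∀ t : ℝ,
      mulExt f (Function.update (Function.update y i (y i + t)) j (y j - t))
        = -α * t ^ 2 + (α * (y j - y i) + β - γ) * t + mulExt f y := by
    intro t
    rw [hF (y i + t) (y j - t), hbase]; ring
  rcases le_max_iff.1 (hquad) with hgood | hgood
  · -- use t = s (move y i down)
    refine ⟨y i + s, y j - s, ?_, ?_, ?_, ?_, by ring, ?_, ?_⟩
    · have : min (y i) (1 - y j) ≤ y i := min_le_left _ _
      rw [hs]; linarith
    · rw [hs]; linarith [hi.2, min_le_left (y i) (1 - y j), hi.1,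
        le_min hi.1.le (le_of_lt (by linarith [hj.2] : (0:ℝ) < 1 - y j))]
    · rw [hs]; linarith [hj.1, le_min hi.1.le (by linarith [hj.2] : (0:ℝ) ≤ 1 - y j)]
    · have : min (y i) (1 - y j) ≤ 1 - y j := min_le_right _ _
      rw [hs]; linarith
    · rcases le_total (y i) (1 - y j) with h | h
      · left; rw [hs, min_eq_left h]; ring
      · right; right; right; rw [hs, min_eq_right h]; ring
    · rw [hφ s]; linarith [hgood]
  · -- use t = u (move y i up)
    refine ⟨y i + u, y j - u, ?_, ?_, ?_, ?_, by ring, ?_, ?_⟩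
    · linarith [hi.1]
    · have : u ≤ 1 - y i := min_le_left _ _
      linarith
    · have : u ≤ y j := min_le_right _ _
      linarith
    · linarith [hj.2, hu0]
    · rcases le_total (1 - y i) (y j) with h | h
      · right; left; rw [hu, min_eq_left h]; ring
      · right; right; left; rw [hu, min_eq_right h]; ring
    · rw [hφ u]; linarith [hgood]

lemma pipage_loop {U : Type*} [Fintype U] [DecidableEq U] {K : Type*} [Fintype K]
    {d : ℕ}
    (f : Finset U → ℝ)
    (hsub : ∀ S T : Finset U, f (S ∪ T) + f (S ∩ T) ≤ f S + f T)
    (cc : U → Fin d → ℝ) (κ : U → K) (Fx : Finset U)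
    (hcc : ∀ i ∈ Fx, ∀ j ∈ Fx, κ i = κ j → cc i = cc j) :
    ∀ n (y : U → ℝ), (∀ l, 0 ≤ y l ∧ y l ≤ 1) →
      (Finset.univ.filter fun i : U => 0 < y i ∧ y i < 1) ⊆ Fx →
      (Finset.univ.filter fun i : U => 0 < y i ∧ y i < 1).card ≤ n →
      ∃ y' : U → ℝ, (∀ l, 0 ≤ y' l ∧ y' l ≤ 1) ∧
        Set.InjOn κ ↑(Finset.univ.filter fun i : U => 0 < y' i ∧ y' i < 1) ∧
        (∀ r, ∑ l, y' l * cc l r = ∑ l, y l * cc l r) ∧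
        mulExt f y ≤ mulExt f y' := by
  intro n
  induction n with
  | zero =>
    intro y hy _ hcard
    refine ⟨y, hy, ?_, fun r => rfl, le_refl _⟩
    have hempty : (Finset.univ.filter fun i : U => 0 < y i ∧ y i < 1) = ∅ :=
      Finset.card_eq_zero.1 (Nat.le_zero.1 hcard)
    rw [hempty]
    simp [Set.InjOn]
  | succ n IH =>
    intro y hy hsubFx hcard
    by_cases hex : ∃ i ∈ (Finset.univ.filter fun i : U => 0 < y i ∧ y i < 1),
        ∃ j ∈ (Finset.univ.filter fun i : U => 0 < y i ∧ y i < 1), i ≠ j ∧ κ i = κ j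
    · obtain ⟨i, hi, j, hj, hij, hκij⟩ := hex
      have hiF : 0 < y i ∧ y i < 1 := (Finset.mem_filter.1 hi).2
      have hjF : 0 < y j ∧ y j < 1 := (Finset.mem_filter.1 hj).2
      obtain ⟨a, b, ha0, ha1, hb0, hb1, hab, hint, hle⟩ :=
        swap_step f hsub y hy i j hij hiF hjF
      set y1 : U → ℝ := Function.update (Function.update y i a) j b with hy1
      have hy1i : y1 i = a := by
        rw [hy1, Function.update_of_ne hij, Function.update_self]
      have hy1j : y1 j = b := by rw [hy1, Function.update_self]
      have hy1other : ∀ l, l ≠ i → l ≠ j → y1 l = y l := by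
        intro l h1 h2
        rw [hy1, Function.update_of_ne h2, Function.update_of_ne h1]
      have hy1bnd : ∀ l, 0 ≤ y1 l ∧ y1 l ≤ 1 := by
        intro l
        by_cases h1 : l = j
        · subst h1; rw [hy1j]; exact ⟨hb0, hb1⟩
        by_cases h2 : l = i
        · subst h2; rw [hy1i]; exact ⟨ha0, ha1⟩
        · rw [hy1other l h2 h1]; exact hy l
      have hsubset : (Finset.univ.filter fun l : U => 0 < y1 l ∧ y1 l < 1)
          ⊆ (Finset.univ.filter fun l : U => 0 < y l ∧ y l < 1) := by
        intro l hl
        have hlF := (Finset.mem_filter.1 hl).2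
        by_cases h1 : l = j
        · subst h1; exact hj
        by_cases h2 : l = i
        · subst h2; exact hi
        · rw [Finset.mem_filter]
          refine ⟨Finset.mem_univ _, ?_⟩
          rwa [hy1other l h2 h1] at hlF
      -- a witness that leaves the fractional set
      have hwit : ∃ wt, wt ∈ (Finset.univ.filter fun l : U => 0 < y l ∧ y l < 1) ∧
          wt ∉ (Finset.univ.filter fun l : U => 0 < y1 l ∧ y1 l < 1) := by
        rcases hint with h | h | h | h
        · exact ⟨i, hi, by simp [Finset.mem_filter, hy1i, h]⟩
        · exact ⟨i, hi, by simp [Finset.mem_filter, hy1i, h]⟩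
        · exact ⟨j, hj, by simp [Finset.mem_filter, hy1j, h]⟩
        · exact ⟨j, hj, by simp [Finset.mem_filter, hy1j, h]⟩
      obtain ⟨wt, hwt1, hwt2⟩ := hwit
      have hssub : (Finset.univ.filter fun l : U => 0 < y1 l ∧ y1 l < 1)
          ⊂ (Finset.univ.filter fun l : U => 0 < y l ∧ y l < 1) :=
        Finset.ssubset_iff_of_subset hsubset |>.2 ⟨wt, hwt1, hwt2⟩
      have hcard1 : (Finset.univ.filter fun l : U => 0 < y1 l ∧ y1 l < 1).card ≤ n := by
        have := Finset.card_lt_card hssub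
        omega
      obtain ⟨y', hy'bnd, hinj, hsum, hle2⟩ :=
        IH y1 hy1bnd (hsubset.trans hsubFx) hcard1
      refine ⟨y', hy'bnd, hinj, ?_, le_trans hle hle2⟩
      intro r
      rw [hsum r]
      have hiFx : i ∈ Fx := hsubFx hi
      have hjFx : j ∈ Fx := hsubFx hj
      have hccij : cc i = cc j := hcc i hiFx j hjFx hκij
      rw [hy1, sum_update_mul, sum_update_mul]
      have hji : Function.update y i a j = y j := Function.update_of_ne (Ne.symm hij) _ _
      rw [hji, hccij]
      linear_combination cc j r * hab
    · push_neg at hex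
      refine ⟨y, hy, ?_, fun r => rfl, le_refl _⟩
      intro p hp q hq hpq
      by_contra hne
      exact (hex p (by simpa using hp) q (by simpa using hq) hne) hpq

theorem reduce_fractional_entries
    {U : Type*} [Fintype U] [DecidableEq U]
    (d k : ℕ) (hd : 1 ≤ d) (hk : 1 ≤ k)
    (ε : ℝ) (hε : 0 < ε) (hε1 : ε < 1)
    (f : Finset U → ℝ)
    (hsub : ∀ S T : Finset U, f (S ∪ T) + f (S ∩ T) ≤ f S + f T)
    (c : U → Fin d → ℝ) (hc : ∀ i r, 0 ≤ c i r)
    (L : Fin d → ℝ) (hL : ∀ r, 0 < L r)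
    (x : U → ℝ) (hx : ∀ i, 0 ≤ x i ∧ x i ≤ 1)
    (hfrac : (Finset.univ.filter fun i : U => 0 < x i ∧ x i < 1).card ≤ k)
    (hsmall : ∀ i : U, 0 < x i → x i < 1 → ∀ r, c i r ≤ ε ^ 3 * L r)
    (hfeas : ∀ r, ∑ i : U, x i * c i r ≤ L r) :
    ∃ x' : U → ℝ, (∀ i, 0 ≤ x' i ∧ x' i ≤ 1) ∧
      ((Finset.univ.filter fun i : U => 0 < x' i ∧ x' i < 1).card : ℝ)
        ≤ (8 * Real.log (2 * k) / ε) ^ d ∧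
      (∀ r, ∑ i : U, x' i * c i r ≤ (1 + ε) * L r) ∧
      mulExt f x ≤ mulExt f x' := by
  have hk1 : (1 : ℝ) ≤ (k : ℝ) := by exact_mod_cast hk
  have hk0 : (0 : ℝ) < (k : ℝ) := by linarith
  have h2k : (1 : ℝ) < 2 * (k : ℝ) := by linarith
  have h2kpos : (0 : ℝ) < 2 * (k : ℝ) := by linarith
  have hlog2k : Real.log 2 ≤ Real.log (2 * (k : ℝ)) :=
    Real.log_le_log (by norm_num) (by linarith)
  have hlogpos : 0 < Real.log (2 * (k : ℝ)) := Real.log_pos h2k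
  set q : ℝ := 1 + ε / 2 with hqdef
  have hq1 : 1 < q := by rw [hqdef]; linarith
  have hq0 : 0 < q := by linarith
  have hlqpos : 0 < Real.log q := Real.log_pos hq1
  have hlq : ε / 3 ≤ Real.log q := by
    have h1 : Real.log q⁻¹ ≤ q⁻¹ - 1 := Real.log_le_sub_one_of_pos (by positivity)
    rw [Real.log_inv] at h1
    have h2 : 1 - q⁻¹ = (ε / 2) / q := by
      field_simp
      rw [hqdef]; ring
    have h3 : ε / 3 ≤ (ε / 2) / q := by
      rw [div_le_div_iff₀ (by norm_num) hq0]
      rw [hqdef]; nlinarith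
    linarith
  set z₀ : ℝ := Real.log (2 * (k : ℝ)) / Real.log q with hz₀def
  have hz₀ : 0 ≤ z₀ := div_nonneg hlogpos.le hlqpos.le
  set m : ℕ := (⌈z₀⌉).toNat with hmdef
  have hmcast : ((m : ℤ) : ℝ) = ((⌈z₀⌉ : ℤ) : ℝ) := by
    rw [hmdef]; norm_cast; exact Int.toNat_of_nonneg (Int.ceil_nonneg hz₀)
  have hmz : z₀ ≤ (m : ℝ) := by
    have := Int.le_ceil z₀
    push_cast at hmcast ⊢
    linarith [hmcast ▸ this]
  have hmz1 : (m : ℝ) ≤ z₀ + 1 := by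
    have := Int.ceil_lt_add_one z₀
    push_cast at hmcast ⊢
    linarith [hmcast ▸ this]
  have hqm : 2 * (k : ℝ) ≤ q ^ m := by
    have h1 : Real.log (2 * (k : ℝ)) ≤ (m : ℝ) * Real.log q := by
      have : z₀ * Real.log q = Real.log (2 * (k : ℝ)) := div_mul_cancel₀ _ hlqpos.ne'
      nlinarith [mul_le_mul_of_nonneg_right hmz hlqpos.le]
    calc 2 * (k : ℝ) = Real.exp (Real.log (2 * (k : ℝ))) := (Real.exp_log h2kpos).symm
      _ ≤ Real.exp ((m : ℝ) * Real.log q) := Real.exp_le_exp.2 h1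
      _ = q ^ m := by
          rw [← Real.log_pow, Real.exp_log (pow_pos hq0 m)]
  set M : ℕ := m + 1 with hMdef
  set rep : ℕ → Fin d → ℝ := fun t r => ε ^ 3 * L r * q / q ^ t with hrep
  have hreppos : ∀ t r, 0 < rep t r := by
    intro t r
    rw [hrep]
    exact div_pos (mul_pos (mul_pos (pow_pos hε 3) (hL r)) hq0) (pow_pos hq0 t)
  have hrepM_eq : ∀ r, rep M r = ε ^ 3 * L r / q ^ m := by
    intro r
    show ε ^ 3 * L r * q / q ^ M = ε ^ 3 * L r / q ^ m
    rw [hMdef, pow_succ q m]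
    rw [mul_comm (q ^ m) q, ← div_div]
    rw [mul_div_assoc, div_self hq0.ne', mul_one]
  have hrepM : ∀ r, rep M r ≤ ε * L r / (2 * (k : ℝ)) := by
    intro r
    rw [hrepM_eq r]
    have hnum : ε ^ 3 * L r ≤ ε * L r := by
      have h9 : 0 ≤ ε * L r * ((1 - ε) * (1 + ε)) :=
        mul_nonneg (mul_nonneg hε.le (hL r).le)
          (mul_nonneg (by linarith) (by linarith))
      nlinarith
    apply div_le_div₀ (mul_nonneg hε.le (hL r).le) hnum h2kpos hqm
  set Fx : Finset U := Finset.univ.filter fun i : U => 0 < x i ∧ x i < 1 with hFx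
  have hFxc : ∀ i ∈ Fx, ∀ r, c i r ≤ ε ^ 3 * L r := by
    intro i hi r
    have h := (Finset.mem_filter.1 hi).2
    exact hsmall i h.1 h.2 r
  set κ : U → Fin d → ℕ := fun i r =>
    if c i r ≤ rep M r then M
    else (⌈Real.log (ε ^ 3 * L r / c i r) / Real.log q⌉).toNat with hκdef
  have hrep_log : ∀ (t : ℕ) r,
      Real.log (rep t r) = Real.log (ε ^ 3 * L r) + Real.log q - (t : ℝ) * Real.log q := by
    intro t r
    rw [hrep]
    rw [Real.log_div (mul_pos (mul_pos (pow_pos hε 3) (hL r)) hq0).ne' (pow_pos hq0 t).ne',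
      Real.log_mul (mul_pos (pow_pos hε 3) (hL r)).ne' hq0.ne', Real.log_pow]
  have hkey : ∀ i ∈ Fx, ∀ r, κ i r ≤ M ∧ c i r ≤ rep (κ i r) r ∧
      rep (κ i r) r ≤ q * c i r + rep M r := by
    intro i hi r
    by_cases hcase : c i r ≤ rep M r
    · have hκv : κ i r = M := by rw [hκdef]; simp [hcase]
      rw [hκv]
      exact ⟨le_refl _, hcase, by nlinarith [hc i r]⟩
    · push_neg at hcase
      have hc0 : 0 < c i r := (hreppos M r).trans hcase
      have hεL : 0 < ε ^ 3 * L r := mul_pos (pow_pos hε 3) (hL r)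
      set z : ℝ := Real.log (ε ^ 3 * L r / c i r) / Real.log q with hzdef
      have hratio1 : 1 ≤ ε ^ 3 * L r / c i r := (one_le_div hc0).2 (hFxc i hi r)
      have hratio0 : 0 < ε ^ 3 * L r / c i r := div_pos hεL hc0
      have hznn : 0 ≤ z := div_nonneg (Real.log_nonneg hratio1) hlqpos.le
      have hκv : κ i r = (⌈z⌉).toNat := by rw [hκdef]; simp [not_le.2 hcase, hzdef]
      have hecast : ((κ i r : ℤ) : ℝ) = ((⌈z⌉ : ℤ) : ℝ) := by
        rw [hκv]; norm_cast; exact Int.toNat_of_nonneg (Int.ceil_nonneg hznn)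
      have hez : z ≤ (κ i r : ℝ) := by
        have := Int.le_ceil z
        push_cast at hecast ⊢
        linarith [hecast ▸ this]
      have hez1 : (κ i r : ℝ) ≤ z + 1 := by
        have := Int.ceil_lt_add_one z
        push_cast at hecast ⊢
        linarith [hecast ▸ this]
      have hzlq : z * Real.log q = Real.log (ε ^ 3 * L r / c i r) :=
        div_mul_cancel₀ _ hlqpos.ne'
      have hlogdiv : Real.log (ε ^ 3 * L r / c i r)
          = Real.log (ε ^ 3 * L r) - Real.log (c i r) :=
        Real.log_div hεL.ne' hc0.ne'
      -- κ i r ≤ M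
      have hzm : z < (m : ℝ) := by
        have h5 : ε ^ 3 * L r / c i r < q ^ m := by
          rw [div_lt_iff₀ hc0]
          have h6 := hcase
          rw [hrepM_eq r] at h6
          rw [div_lt_iff₀ (pow_pos hq0 m)] at h6
          linarith
        have h7 : Real.log (ε ^ 3 * L r / c i r) < (m : ℝ) * Real.log q := by
          calc Real.log (ε ^ 3 * L r / c i r) < Real.log (q ^ m) :=
                Real.log_lt_log hratio0 h5
            _ = (m : ℝ) * Real.log q := by rw [Real.log_pow]
        rw [hzdef, div_lt_iff₀ hlqpos]
        exact h7
      have hκM : κ i r ≤ M := by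
        have : (κ i r : ℝ) ≤ (M : ℝ) := by
          rw [hMdef]; push_cast
          linarith
        exact_mod_cast this
      refine ⟨hκM, ?_, ?_⟩
      · -- c ≤ rep (κ i r) r
        rw [← Real.log_le_log_iff hc0 (hreppos _ r), hrep_log]
        have : ((κ i r : ℝ) - 1) * Real.log q ≤ z * Real.log q :=
          mul_le_mul_of_nonneg_right (by linarith) hlqpos.le
        rw [hzlq, hlogdiv] at this
        linarith
      · -- rep (κ i r) r ≤ q * c i r + rep M r
        have h8 : rep (κ i r) r ≤ q * c i r := by
          rw [← Real.log_le_log_iff (hreppos _ r) (mul_pos hq0 hc0), hrep_log,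
            Real.log_mul hq0.ne' hc0.ne']
          have : z * Real.log q ≤ (κ i r : ℝ) * Real.log q :=
            mul_le_mul_of_nonneg_right hez hlqpos.le
          rw [hzlq, hlogdiv] at this
          linarith
        linarith [hreppos M r]
  set cc : U → Fin d → ℝ := fun i r => if i ∈ Fx then rep (κ i r) r else c i r with hccdef
  have hccle : ∀ i r, c i r ≤ cc i r := by
    intro i r
    rw [hccdef]
    by_cases h : i ∈ Fx
    · simp only [h, if_true]
      exact (hkey i h r).2.1
    · simp [h]
  have hbud : ∀ r, ∑ i : U, x i * cc i r ≤ (1 + ε) * L r := by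
    intro r
    have step1 : ∑ i : U, x i * cc i r
        ≤ ∑ i : U, (q * (x i * c i r) + if i ∈ Fx then rep M r else 0) := by
      apply Finset.sum_le_sum
      intro i _
      rw [hccdef]
      by_cases h : i ∈ Fx
      · simp only [h, if_true]
        have h2 := (hkey i h r).2.2
        have hx1 := (hx i).1
        have hx2 := (hx i).2
        have := mul_le_mul_of_nonneg_left h2 hx1
        nlinarith [hreppos M r, hc i r]
      · simp only [h, if_false]
        have hx1 := (hx i).1
        nlinarith [hc i r, mul_nonneg hx1 (hc i r)]
    have step2 : ∑ i : U, (q * (x i * c i r) + if i ∈ Fx then rep M r else 0)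
        = q * (∑ i : U, x i * c i r) + (Fx.card : ℝ) * rep M r := by
      rw [Finset.sum_add_distrib, ← Finset.mul_sum, Finset.sum_ite_mem,
        Finset.univ_inter, Finset.sum_const, nsmul_eq_mul]
    have step3 : q * (∑ i : U, x i * c i r) + (Fx.card : ℝ) * rep M r
        ≤ q * L r + (k : ℝ) * (ε * L r / (2 * (k : ℝ))) := by
      have h1 : q * (∑ i : U, x i * c i r) ≤ q * L r :=
        mul_le_mul_of_nonneg_left (hfeas r) hq0.le
      have h2 : (Fx.card : ℝ) * rep M r ≤ (k : ℝ) * (ε * L r / (2 * (k : ℝ))) := by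
        apply mul_le_mul (by exact_mod_cast hfrac) (hrepM r) (hreppos M r).le hk0.le
      exact add_le_add h1 h2
    have step4 : q * L r + (k : ℝ) * (ε * L r / (2 * (k : ℝ))) = (1 + ε) * L r := by
      rw [hqdef]
      field_simp
      ring
    calc ∑ i : U, x i * cc i r
        ≤ ∑ i : U, (q * (x i * c i r) + if i ∈ Fx then rep M r else 0) := step1
      _ = q * (∑ i : U, x i * c i r) + (Fx.card : ℝ) * rep M r := step2
      _ ≤ q * L r + (k : ℝ) * (ε * L r / (2 * (k : ℝ))) := step3
      _ = (1 + ε) * L r := step4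
  set κ' : U → (Fin d → Fin (M + 1)) := fun i r =>
    ⟨min (κ i r) M, Nat.lt_succ_of_le (min_le_right _ _)⟩ with hκ'def
  have hκ'cc : ∀ i ∈ Fx, ∀ j ∈ Fx, κ' i = κ' j → cc i = cc j := by
    intro i hi j hj h
    funext r
    have h1 : κ' i r = κ' j r := congrFun h r
    have h2 : min (κ i r) M = min (κ j r) M := congrArg Fin.val h1
    rw [min_eq_left (hkey i hi r).1, min_eq_left (hkey j hj r).1] at h2
    rw [hccdef]
    simp only [hi, hj, if_true, h2]
  obtain ⟨y', hy'bnd, hinj, hsum, hle⟩ :=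
    pipage_loop f hsub cc κ' Fx hκ'cc Fx.card x hx (Finset.Subset.refl _) le_rfl
  refine ⟨y', hy'bnd, ?_, ?_, hle⟩
  · -- cardinality bound
    have hcard : (Finset.univ.filter fun i : U => 0 < y' i ∧ y' i < 1).card ≤ (M + 1) ^ d := by
      have h1 := Finset.card_le_card_of_injOn κ'
        (fun a _ => Finset.mem_univ (κ' a)) hinj
      rwa [Finset.card_univ, Fintype.card_fun, Fintype.card_fin, Fintype.card_fin] at h1
    have hM : ((M : ℝ) + 1) ≤ 8 * Real.log (2 * (k : ℝ)) / ε := by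
      have hz3 : z₀ ≤ 3 * Real.log (2 * (k : ℝ)) / ε := by
        have h1 : z₀ ≤ Real.log (2 * (k : ℝ)) / (ε / 3) := by
          rw [hz₀def]
          exact div_le_div_of_nonneg_left hlogpos.le (by positivity) hlq
        have h2 : Real.log (2 * (k : ℝ)) / (ε / 3) = 3 * Real.log (2 * (k : ℝ)) / ε := by
          field_simp
        linarith
      have h3 : 3 ≤ 5 * Real.log (2 * (k : ℝ)) / ε := by
        rw [le_div_iff₀ hε]
        nlinarith [Real.log_two_gt_d9]
      have hMm : (M : ℝ) = (m : ℝ) + 1 := by rw [hMdef]; push_cast; ring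
      rw [hMm]
      have h4 : 3 * Real.log (2 * (k : ℝ)) / ε + 5 * Real.log (2 * (k : ℝ)) / ε
          = 8 * Real.log (2 * (k : ℝ)) / ε := by ring
      linarith
    calc ((Finset.univ.filter fun i : U => 0 < y' i ∧ y' i < 1).card : ℝ)
        ≤ (((M + 1) ^ d : ℕ) : ℝ) := by exact_mod_cast hcard
      _ = ((M : ℝ) + 1) ^ d := by push_cast; ring
      _ ≤ (8 * Real.log (2 * (k : ℝ)) / ε) ^ d := by
          apply pow_le_pow_left₀ (by positivity) hM d
  · -- budget
    intro r
    calc ∑ i : U, y' i * c i r ≤ ∑ i : U, y' i * cc i r := by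
          apply Finset.sum_le_sum
          intro i _
          exact mul_le_mul_of_nonneg_left (hccle i r) (hy'bnd i).1
      _ = ∑ i : U, x i * cc i r := hsum r
      _ ≤ (1 + ε) * L r := hbud r
end
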